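/- arXiv:1808.03888 — 6 statements merged into one kernel-verified Lean document; each statement's English description precedes it below -/
import Mathlib

section
/- Let $H$ be a hypergraph in which every edge contains at least $k$ vertices and meets (i.e., intersects) at most $d$ other edges. If $e(d+1) \leq 2^{k-1}$ (where $e$ is Euler's number), then $H$ has a 2-coloring, i.e., there exists a coloring of the vertices of $H$ with 2 colors such that no edge of $H$ is monochromatic. -/
namespace ELH

variable {V : Type*} [DecidableEq V]


variable {V : Type*} [DecidableEq V]

/-- `T` splits `f` properly (f not monochromatic under indicator of T). -/
def pr (f T : Finset V) : Prop := (∃ v ∈ f, v ∈ T) ∧ (∃ v ∈ f, v ∉ T)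

instance (f T : Finset V) : Decidable (pr f T) := by unfold pr; infer_instance

/-- colorings (as subsets of `verts`) splitting every edge of `S` properly -/
def A (verts : Finset V) (S : Finset (Finset V)) : Finset (Finset V) :=
  verts.powerset.filter (fun T => ∀ f ∈ S, pr f T)

def bad (verts : Finset V) (S : Finset (Finset V)) (f : Finset V) : ℕ :=
  ((A verts S).filter (fun T => ¬ pr f T)).card

lemma A_insert (verts : Finset V) (S : Finset (Finset V)) (f : Finset V) :
    A verts (insert f S) = (A verts S).filter (fun T => pr f T) := by
  ext T
  simp only [A, Finset.mem_filter, Finset.mem_powerset, Finset.mem_insert]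
  constructor
  · rintro ⟨h1, h2⟩
    exact ⟨⟨h1, fun g hg => h2 g (Or.inr hg)⟩, h2 f (Or.inl rfl)⟩
  · rintro ⟨⟨h1, h2⟩, h3⟩
    refine ⟨h1, fun g hg => ?_⟩
    rcases hg with rfl | hg
    · exact h3
    · exact h2 g hg

lemma card_split (verts : Finset V) (S : Finset (Finset V)) (f : Finset V) :
    (A verts S).card = (A verts (insert f S)).card + bad verts S f := by
  rw [A_insert, bad]
  exact (Finset.card_filter_add_card_filter_not _).symm

lemma A_anti (verts : Finset V) {S S' : Finset (Finset V)} (h : S ⊆ S') :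
    A verts S' ⊆ A verts S := by
  intro T hT
  simp only [A, Finset.mem_filter, Finset.mem_powerset] at hT ⊢
  exact ⟨hT.1, fun f hf => hT.2 f (h hf)⟩

lemma bad_anti (verts : Finset V) {S S' : Finset (Finset V)} (h : S ⊆ S') (f : Finset V) :
    bad verts S' f ≤ bad verts S f := by
  apply Finset.card_le_card
  intro T hT
  simp only [Finset.mem_filter] at hT ⊢
  exact ⟨A_anti verts h hT.1, hT.2⟩


lemma not_pr_cases {f T : Finset V} (h : ¬ pr f T) : f ⊆ T ∨ ∀ v ∈ f, v ∉ T := by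
  by_cases hsub : f ⊆ T
  · exact Or.inl hsub
  · right
    intro v hv hvT
    exact hsub (fun w hw => by_contra fun hwT => h ⟨⟨v, hv, hvT⟩, ⟨w, hw, hwT⟩⟩)

lemma count (verts : Finset V) (S : Finset (Finset V)) (f : Finset V)
    (hfv : f ⊆ verts) (hdisj : ∀ g ∈ S, Disjoint f g) :
    bad verts S f * 2 ^ f.card ≤ 2 * (A verts S).card := by
  classical
  have key : (((A verts S).filter (fun T => ¬ pr f T)) ×ˢ f.powerset).card ≤
      ((A verts S) ×ˢ (Finset.univ : Finset (Fin 2))).card := by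
    apply Finset.card_le_card_of_injOn
      (fun p => ((p.1 \ f) ∪ p.2, if f ⊆ p.1 then 0 else 1))
    · rintro ⟨T, F⟩ hp
      simp only [Finset.mem_coe, Finset.mem_product, Finset.mem_filter, Finset.mem_powerset] at hp
      obtain ⟨⟨hTA, hTb⟩, hF⟩ := hp
      simp only [Finset.mem_coe, Finset.mem_product, Finset.mem_univ, and_true]
      simp only [A, Finset.mem_filter, Finset.mem_powerset] at hTA ⊢
      constructor
      · exact Finset.union_subset ((Finset.sdiff_subset).trans hTA.1) (hF.trans hfv)
      · intro g hg
        obtain ⟨⟨v, hvg, hvT⟩, ⟨w, hwg, hwT⟩⟩ := hTA.2 g hg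
        have hvf : v ∉ f := fun hvf => Finset.disjoint_left.mp (hdisj g hg) hvf hvg
        have hwf : w ∉ f := fun hwf => Finset.disjoint_left.mp (hdisj g hg) hwf hwg
        refine ⟨⟨v, hvg, ?_⟩, ⟨w, hwg, ?_⟩⟩
        · exact Finset.mem_union_left _ (Finset.mem_sdiff.mpr ⟨hvT, hvf⟩)
        · intro hmem
          rcases Finset.mem_union.mp hmem with h | h
          · exact hwT (Finset.mem_sdiff.mp h).1
          · exact hwf (hF h)
    · rintro ⟨T1, F1⟩ h1 ⟨T2, F2⟩ h2 heq
      simp only [Finset.mem_coe, Finset.mem_product, Finset.mem_filter,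
        Finset.mem_powerset] at h1 h2
      obtain ⟨⟨hT1A, hT1b⟩, hF1⟩ := h1
      obtain ⟨⟨hT2A, hT2b⟩, hF2⟩ := h2
      simp only [Prod.mk.injEq] at heq
      obtain ⟨heq1, heq2⟩ := heq
      have hb : (f ⊆ T1) ↔ (f ⊆ T2) := by
        by_cases hA : f ⊆ T1 <;> by_cases hB : f ⊆ T2 <;>
          simp [hA, hB] at heq2 <;> tauto
      have hF12 : F1 = F2 := by
        ext v
        constructor
        · intro hv
          have hvf : v ∈ f := hF1 hv
          have : v ∈ (T2 \ f) ∪ F2 := heq1 ▸ Finset.mem_union_right _ hv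
          rcases Finset.mem_union.mp this with h | h
          · exact absurd hvf (Finset.mem_sdiff.mp h).2
          · exact h
        · intro hv
          have hvf : v ∈ f := hF2 hv
          have : v ∈ (T1 \ f) ∪ F1 := heq1 ▸ Finset.mem_union_right _ hv
          rcases Finset.mem_union.mp this with h | h
          · exact absurd hvf (Finset.mem_sdiff.mp h).2
          · exact h
      have hdf : T1 \ f = T2 \ f := by
        ext v
        constructor
        · intro hv
          have hvnf : v ∉ f := (Finset.mem_sdiff.mp hv).2
          have : v ∈ (T2 \ f) ∪ F2 := heq1 ▸ Finset.mem_union_left _ hv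
          rcases Finset.mem_union.mp this with h | h
          · exact h
          · exact absurd (hF2 h) hvnf
        · intro hv
          have hvnf : v ∉ f := (Finset.mem_sdiff.mp hv).2
          have : v ∈ (T1 \ f) ∪ F1 := heq1 ▸ Finset.mem_union_left _ hv
          rcases Finset.mem_union.mp this with h | h
          · exact h
          · exact absurd (hF1 h) hvnf
      have hT12 : T1 = T2 := by
        ext v
        by_cases hvf : v ∈ f
        · by_cases hA : f ⊆ T1
          · simp [hA hvf, (hb.mp hA) hvf]
          · have hB : ¬ f ⊆ T2 := fun h => hA (hb.mpr h)
            have e1 := (not_pr_cases hT1b).resolve_left hA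
            have e2 := (not_pr_cases hT2b).resolve_left hB
            simp [e1 v hvf, e2 v hvf]
        · constructor
          · intro h
            have : v ∈ T2 \ f := hdf ▸ Finset.mem_sdiff.mpr ⟨h, hvf⟩
            exact (Finset.mem_sdiff.mp this).1
          · intro h
            have : v ∈ T1 \ f := hdf.symm ▸ Finset.mem_sdiff.mpr ⟨h, hvf⟩
            exact (Finset.mem_sdiff.mp this).1
      exact Prod.ext hT12 hF12
  rw [Finset.card_product, Finset.card_powerset, Finset.card_product,
    Finset.card_univ, Fintype.card_fin] at key
  rw [bad]
  omega

lemma main (E : Finset (Finset V)) (k d : ℕ)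
    (hcard : ∀ f ∈ E, k ≤ f.card)
    (hmeet : ∀ f ∈ E, (E.filter (fun g => g ≠ f ∧ (f ∩ g).Nonempty)).card ≤ d)
    (hineq : Real.exp 1 * ((d : ℝ) + 1) ≤ 2 ^ (k - 1))
    (hk : 1 ≤ k) :
    ∀ n (S : Finset (Finset V)), S.card = n → S ⊆ E → ∀ f ∈ E, f ∉ S →
      (bad (E.sup id) S f : ℝ) * 2 ^ (k-1) ≤ Real.exp 1 * (A (E.sup id) S).card := by
  intro n
  induction n using Nat.strong_induction_on with
  | _ n IH =>
  intro S hScard hSE f hfE hfS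
  set verts := E.sup id with hverts
  set S1 := S.filter (fun g => (f ∩ g).Nonempty) with hS1
  set S2 := S.filter (fun g => ¬ (f ∩ g).Nonempty) with hS2
  have hq0 : (0:ℝ) < 2 ^ (k-1) := by positivity
  have he1 : (1:ℝ) ≤ Real.exp 1 := by
    calc (1:ℝ) = Real.exp 0 := (Real.exp_zero).symm
    _ ≤ Real.exp 1 := Real.exp_le_exp.mpr zero_le_one
  have hfv : f ⊆ verts := Finset.le_sup (f := id) hfE
  -- Step B : independence bound against S2
  have hdisj2 : ∀ g ∈ S2, Disjoint f g := by
    intro g hg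
    rw [Finset.disjoint_iff_inter_eq_empty]
    exact Finset.not_nonempty_iff_eq_empty.mp (Finset.mem_filter.mp hg).2
  have hB : bad verts S f * 2 ^ f.card ≤ 2 * (A verts S2).card :=
    le_trans (Nat.mul_le_mul_right _ (bad_anti verts (Finset.filter_subset _ _) f))
      (count verts S2 f hfv hdisj2)
  have hBk : bad verts S f * 2 ^ (k-1) ≤ (A verts S2).card := by
    have h1 : 2 * 2 ^ (k-1) ≤ 2 ^ f.card := by
      have h2 : 2 ^ k ≤ 2 ^ f.card := Nat.pow_le_pow_right (by norm_num) (hcard f hfE)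
      have h3 : 2 * 2 ^ (k-1) = 2 ^ k := by
        rw [← pow_succ']
        congr 1
        omega
      omega
    have h4 : 2 * (bad verts S f * 2 ^ (k-1)) ≤ 2 * (A verts S2).card := by
      calc 2 * (bad verts S f * 2 ^ (k-1)) = bad verts S f * (2 * 2 ^ (k-1)) := by ring
      _ ≤ bad verts S f * 2 ^ f.card := Nat.mul_le_mul_left _ h1
      _ ≤ 2 * (A verts S2).card := hB
    omega
  -- S1 has at most d elements
  have hS1card : S1.card ≤ d := by
    refine le_trans (Finset.card_le_card ?_) (hmeet f hfE)
    intro g hg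
    rw [hS1, Finset.mem_filter] at hg
    refine Finset.mem_filter.mpr ⟨hSE hg.1, ?_, hg.2⟩
    rintro rfl
    exact hfS hg.1
  -- peeling
  have peel : ∀ (S1' : Finset (Finset V)), S1' ⊆ S1 →
      ((A verts S2).card : ℝ) * (d:ℝ) ^ S1'.card ≤
        ((A verts (S2 ∪ S1')).card : ℝ) * ((d:ℝ)+1) ^ S1'.card := by
    intro S1'
    induction S1' using Finset.induction_on with
    | empty => simp
    | @insert g s hg ih =>
      intro hsub
      have hsub' : s ⊆ S1 := (Finset.subset_insert g s).trans hsub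
      have ih' := ih hsub'
      have hgS1 : g ∈ S1 := hsub (Finset.mem_insert_self g s)
      have hgS : g ∈ S := (Finset.mem_filter.mp hgS1).1
      have hgE : g ∈ E := hSE hgS
      have hgint : (f ∩ g).Nonempty := (Finset.mem_filter.mp hgS1).2
      set T := S2 ∪ s with hT
      have hgT : g ∉ T := by
        rw [hT, Finset.mem_union]
        rintro (h | h)
        · exact (Finset.mem_filter.mp h).2 hgint
        · exact hg h
      have hTS : T ⊆ S := Finset.union_subset (Finset.filter_subset _ _)
        (hsub'.trans (Finset.filter_subset _ _))
      have hTE : T ⊆ E := hTS.trans hSE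
      have hTcard : T.card < n := by
        have h1 : T ⊆ S.erase g := by
          intro x hx
          exact Finset.mem_erase.mpr ⟨fun hxg => hgT (hxg ▸ hx), hTS hx⟩
        have h2 := Finset.card_le_card h1
        have h3 := Finset.card_erase_of_mem hgS
        have h4 : 1 ≤ S.card := Finset.card_pos.mpr ⟨g, hgS⟩
        omega
      have hIH := IH T.card hTcard T rfl hTE g hgE hgT
      -- (d+1) * bad T g ≤ N T
      have hstep1 : ((d:ℝ)+1) * (bad verts T g : ℝ) ≤ ((A verts T).card : ℝ) := by
        have h5 : ((d:ℝ)+1) * ((bad verts T g : ℝ) * 2 ^ (k-1)) ≤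
            ((d:ℝ)+1) * (Real.exp 1 * (A verts T).card) := by
          apply mul_le_mul_of_nonneg_left hIH
          positivity
        have h6 : ((d:ℝ)+1) * (Real.exp 1 * (A verts T).card) ≤
            (2:ℝ) ^ (k-1) * (A verts T).card := by
          have h6a : ((d:ℝ)+1) * Real.exp 1 ≤ (2:ℝ) ^ (k-1) := by
            rw [mul_comm]; exact hineq
          calc ((d:ℝ)+1) * (Real.exp 1 * (A verts T).card)
              = (((d:ℝ)+1) * Real.exp 1) * (A verts T).card := by ring
            _ ≤ (2:ℝ) ^ (k-1) * (A verts T).card :=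
                mul_le_mul_of_nonneg_right h6a (Nat.cast_nonneg _)
        have h7 : (((d:ℝ)+1) * (bad verts T g : ℝ)) * 2 ^ (k-1) ≤
            ((A verts T).card : ℝ) * 2 ^ (k-1) := by
          calc (((d:ℝ)+1) * (bad verts T g : ℝ)) * 2 ^ (k-1)
              = ((d:ℝ)+1) * ((bad verts T g : ℝ) * 2 ^ (k-1)) := by ring
            _ ≤ ((d:ℝ)+1) * (Real.exp 1 * (A verts T).card) := h5
            _ ≤ 2 ^ (k-1) * (A verts T).card := h6
            _ = ((A verts T).card : ℝ) * 2 ^ (k-1) := by ring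
        exact le_of_mul_le_mul_right h7 hq0
      have hsplit : ((A verts T).card : ℝ) =
          ((A verts (insert g T)).card : ℝ) + (bad verts T g : ℝ) := by
        have := card_split verts T g
        push_cast [this]
        ring
      have hstep : (d:ℝ) * ((A verts T).card : ℝ) ≤
          ((d:ℝ)+1) * ((A verts (insert g T)).card : ℝ) := by
        nlinarith [hstep1, hsplit]
      have hunion : S2 ∪ insert g s = insert g T := by
        rw [hT, Finset.union_insert]
      rw [Finset.card_insert_of_notMem hg, hunion]
      have hd0 : (0:ℝ) ≤ (d:ℝ) := Nat.cast_nonneg _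
      have hdp : (0:ℝ) ≤ ((d:ℝ)+1) ^ s.card := by positivity
      calc ((A verts S2).card : ℝ) * (d:ℝ) ^ (s.card + 1)
          = (((A verts S2).card : ℝ) * (d:ℝ) ^ s.card) * (d:ℝ) := by ring
        _ ≤ (((A verts (S2 ∪ s)).card : ℝ) * ((d:ℝ)+1) ^ s.card) * (d:ℝ) :=
            mul_le_mul_of_nonneg_right ih' hd0
        _ = ((d:ℝ) * ((A verts T).card : ℝ)) * ((d:ℝ)+1) ^ s.card := by rw [hT]; ring
        _ ≤ (((d:ℝ)+1) * ((A verts (insert g T)).card : ℝ)) * ((d:ℝ)+1) ^ s.card :=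
            mul_le_mul_of_nonneg_right hstep hdp
        _ = ((A verts (insert g T)).card : ℝ) * ((d:ℝ)+1) ^ (s.card + 1) := by ring
  have hunionS : S2 ∪ S1 = S := by
    rw [hS1, hS2, Finset.union_comm]
    exact Finset.filter_union_filter_not_eq _ S
  have hpeel := peel S1 le_rfl
  rw [hunionS] at hpeel
  -- (d+1)^s ≤ e * d^s
  have hE2 : ((d:ℝ)+1) ^ S1.card ≤ Real.exp 1 * (d:ℝ) ^ S1.card := by
    rcases Nat.eq_zero_or_pos d with rfl | hd
    · have : S1.card = 0 := by omega
      simp [this, he1]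
    · have hdr : (0:ℝ) < d := by exact_mod_cast hd
      have h1 : ((d:ℝ)+1) ≤ (d:ℝ) * Real.exp (1/(d:ℝ)) := by
        have h2 := Real.add_one_le_exp (1/(d:ℝ))
        have h3 := mul_le_mul_of_nonneg_left h2 hdr.le
        rw [mul_add, mul_one, mul_one_div, div_self hdr.ne'] at h3
        linarith
      calc ((d:ℝ)+1) ^ S1.card ≤ ((d:ℝ) * Real.exp (1/(d:ℝ))) ^ S1.card := by
            apply pow_le_pow_left₀ (by positivity) h1 _
        _ = (d:ℝ) ^ S1.card * Real.exp (1/(d:ℝ)) ^ S1.card := mul_pow _ _ _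
        _ = (d:ℝ) ^ S1.card * Real.exp (S1.card * (1/(d:ℝ))) := by
            rw [← Real.exp_nat_mul]
        _ ≤ (d:ℝ) ^ S1.card * Real.exp 1 := by
            apply mul_le_mul_of_nonneg_left _ (by positivity)
            apply Real.exp_le_exp.mpr
            rw [mul_one_div]
            rw [div_le_one hdr]
            exact_mod_cast hS1card
        _ = Real.exp 1 * (d:ℝ) ^ S1.card := by ring
  have hds : (0:ℝ) < (d:ℝ) ^ S1.card := by
    rcases Nat.eq_zero_or_pos d with rfl | hd
    · have : S1.card = 0 := by omega
      simp [this]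
    · have hdr : (0:ℝ) < d := by exact_mod_cast hd
      positivity
  have hS2S : ((A verts S2).card : ℝ) ≤ Real.exp 1 * ((A verts S).card : ℝ) := by
    have h7 : ((A verts S2).card : ℝ) * (d:ℝ) ^ S1.card ≤
        (Real.exp 1 * ((A verts S).card : ℝ)) * (d:ℝ) ^ S1.card := by
      calc ((A verts S2).card : ℝ) * (d:ℝ) ^ S1.card
          ≤ ((A verts S).card : ℝ) * ((d:ℝ)+1) ^ S1.card := hpeel
        _ ≤ ((A verts S).card : ℝ) * (Real.exp 1 * (d:ℝ) ^ S1.card) :=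
            mul_le_mul_of_nonneg_left hE2 (Nat.cast_nonneg _)
        _ = (Real.exp 1 * ((A verts S).card : ℝ)) * (d:ℝ) ^ S1.card := by ring
    exact le_of_mul_le_mul_right h7 hds
  calc (bad verts S f : ℝ) * 2 ^ (k-1) ≤ ((A verts S2).card : ℝ) := by
        exact_mod_cast hBk
    _ ≤ Real.exp 1 * ((A verts S).card : ℝ) := hS2S

lemma pos (E : Finset (Finset V)) (k d : ℕ)
    (hcard : ∀ f ∈ E, k ≤ f.card)
    (hmeet : ∀ f ∈ E, (E.filter (fun g => g ≠ f ∧ (f ∩ g).Nonempty)).card ≤ d)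
    (hineq : Real.exp 1 * ((d : ℝ) + 1) ≤ 2 ^ (k - 1))
    (hk : 3 ≤ k) :
    ∀ n (S : Finset (Finset V)), S.card = n → S ⊆ E → 0 < (A (E.sup id) S).card := by
  intro n
  induction n using Nat.strong_induction_on with
  | _ n IH =>
  intro S hScard hSE
  rcases S.eq_empty_or_nonempty with rfl | ⟨g, hg⟩
  · have hA0 : A (E.sup id) ∅ = (E.sup id).powerset := by
      simp [A]
    rw [hA0, Finset.card_powerset]
    positivity
  · set S' := S.erase g with hS'
    have h1 : S = insert g S' := (Finset.insert_erase hg).symm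
    have hcard' : S'.card < n := hScard ▸ Finset.card_erase_lt_of_mem hg
    have hsub : S' ⊆ E := (Finset.erase_subset g S).trans hSE
    have hpos' := IH S'.card hcard' S' rfl hsub
    have hmain := main E k d hcard hmeet hineq (by omega) S'.card S' rfl hsub g
      (hSE hg) (Finset.notMem_erase g S)
    have hsplit := card_split (E.sup id) S' g
    by_contra h0
    push_neg at h0
    rw [h1] at h0
    have h0' : (A (E.sup id) (insert g S')).card = 0 := by omega
    have hbadeq : bad (E.sup id) S' g = (A (E.sup id) S').card := by omega
    rw [hbadeq] at hmain
    have hq4 : (4:ℝ) ≤ (2:ℝ) ^ (k-1) := by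
      calc (4:ℝ) = 2 ^ 2 := by norm_num
      _ ≤ 2 ^ (k-1) := pow_le_pow_right₀ one_le_two (by omega)
    have he4 : Real.exp 1 < 4 := by
      have := Real.exp_one_lt_d9
      linarith
    have hNpos : (0:ℝ) < ((A (E.sup id) S').card : ℝ) := by exact_mod_cast hpos'
    nlinarith [hmain, hq4, he4, hNpos]

end ELH

/-- **Theorem (Erdős–Lovász 1975).** Let `H` be a hypergraph in which every edge
contains at least `k` vertices and meets at most `d` other edges.
If `e(d+1) ≤ 2^(k-1)` then `H` has a 2-coloring, i.e. there is a coloring of the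
vertices with 2 colors such that no edge is monochromatic. -/
theorem hypergraph_two_coloring_EL {V : Type*} [DecidableEq V]
    (E : Finset (Finset V)) (k d : ℕ)
    (hcard : ∀ f ∈ E, k ≤ f.card)
    (hmeet : ∀ f ∈ E, (E.filter (fun g => g ≠ f ∧ (f ∩ g).Nonempty)).card ≤ d)
    (hineq : Real.exp 1 * ((d : ℝ) + 1) ≤ 2 ^ (k - 1)) :
    ∃ c : V → Fin 2, ∀ f ∈ E, ∃ v ∈ f, ∃ w ∈ f, c v ≠ c w := by
  classical
  have hk : 3 ≤ k := by
    have he2 : (2:ℝ) < Real.exp 1 := by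
      have := Real.exp_one_gt_d9
      linarith
    have hd1 : (1:ℝ) ≤ (d:ℝ) + 1 := by
      have : (0:ℝ) ≤ (d:ℝ) := Nat.cast_nonneg d
      linarith
    have h2 : (2:ℝ) ^ 1 < (2:ℝ) ^ (k-1) := by
      rw [pow_one]
      calc (2:ℝ) < Real.exp 1 := he2
      _ ≤ Real.exp 1 * ((d:ℝ) + 1) := le_mul_of_one_le_right (by positivity) hd1
      _ ≤ 2 ^ (k-1) := hineq
    have h3 : 1 < k - 1 := by
      exact_mod_cast (pow_lt_pow_iff_right₀ (by norm_num : (1:ℝ) < 2)).mp h2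
    omega
  have hApos := ELH.pos E k d hcard hmeet hineq hk E.card E rfl le_rfl
  obtain ⟨T, hT⟩ := Finset.card_pos.mp hApos
  have hT' : ∀ f ∈ E, ELH.pr f T := by
    simp only [ELH.A, Finset.mem_filter] at hT
    exact hT.2
  refine ⟨fun v => if v ∈ T then 0 else 1, fun f hf => ?_⟩
  obtain ⟨⟨v, hv, hvT⟩, ⟨w, hw, hwT⟩⟩ := hT' f hf
  refine ⟨v, hv, w, hw, ?_⟩
  simp [hvT, hwT]
end

section
/- Let $H$ be a hypergraph in which every edge contains at least $k$ vertices and meets (i.e., intersects) at most $d$ other edges. If $e(d+2) \leq 2^{k}$ (where $e$ is Euler's number), then $H$ has a 2-coloring, i.e., there exists a coloring of the vertices of $H$ with 2 colors such that no edge of $H$ is monochromatic. -/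
open Finset

namespace McDLLL

variable {V : Type*} [DecidableEq V] (E : Finset (Finset V))

/-- All vertices occurring in some edge. -/
def U : Finset V := E.sup id

/-- The space of colorings of the relevant vertices. -/
abbrev Omega (E : Finset (Finset V)) := (↥(U E) → Fin 2)

lemma subset_U {f : Finset V} (hf : f ∈ E) : f ⊆ U E := Finset.le_sup (f := id) hf

/-- Event: edge `f` is monochromatic in color `j`. -/
def A (f : Finset V) (j : Fin 2) : Finset (Omega E) :=
  univ.filter fun x => ∀ v : ↥(U E), ↑v ∈ f → x v = j

/-- Good colorings relative to a set `S` of (edge, color) pairs: every pair in `S`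
has a witness vertex of the other color. -/
def G (S : Finset (Finset V × Fin 2)) : Finset (Omega E) :=
  univ.filter fun x => ∀ p ∈ S, ∃ v : ↥(U E), ↑v ∈ p.1 ∧ x v ≠ p.2

lemma mem_G {S : Finset (Finset V × Fin 2)} {x : Omega E} :
    x ∈ G E S ↔ ∀ p ∈ S, ∃ v : ↥(U E), ↑v ∈ p.1 ∧ x v ≠ p.2 := by
  simp [G]

lemma mem_A {f : Finset V} {j : Fin 2} {x : Omega E} :
    x ∈ A E f j ↔ ∀ v : ↥(U E), ↑v ∈ f → x v = j := by
  simp [A]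

lemma G_mono {S T : Finset (Finset V × Fin 2)} (h : S ⊆ T) : G E T ⊆ G E S := by
  intro x hx
  rw [mem_G] at hx ⊢
  exact fun p hp => hx p (h hp)

lemma G_insert (p : Finset V × Fin 2) (S : Finset (Finset V × Fin 2)) :
    G E (insert p S) = G E S \ A E p.1 p.2 := by
  ext x
  simp only [mem_G, mem_sdiff, mem_A, Finset.mem_insert]
  constructor
  · intro h
    refine ⟨fun q hq => h q (Or.inr hq), ?_⟩
    intro hall
    obtain ⟨v, hv, hne⟩ := h p (Or.inl rfl)
    exact hne (hall v hv)
  · rintro ⟨h1, h2⟩ q hq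
    rcases hq with rfl | hq
    · push_neg at h2
      obtain ⟨v, hv, hne⟩ := h2
      exact ⟨v, hv, hne⟩
    · exact h1 q hq

lemma card_G_insert (p : Finset V × Fin 2) (S : Finset (Finset V × Fin 2)) :
    (G E (insert p S)).card = (G E S).card - (G E S ∩ A E p.1 p.2).card := by
  rw [G_insert, ← Finset.sdiff_inter_self_left, Finset.card_sdiff_of_subset inter_subset_left]

/-- The key counting (correlation) lemma: if `S` only contains pairs that either have
color `j` or an edge disjoint from `f`, then conditioned on `G S`, the event that `f`
is monochromatic `j` has probability at most `2⁻ᵏ`. -/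
lemma base {k : ℕ} (hcard : ∀ f ∈ E, k ≤ f.card)
    {f : Finset V} (hf : f ∈ E) (j : Fin 2)
    {S : Finset (Finset V × Fin 2)}
    (hS : ∀ p ∈ S, p.2 = j ∨ f ∩ p.1 = ∅) :
    (G E S ∩ A E f j).card * 2 ^ k ≤ (G E S).card := by
  obtain ⟨f', hf'sub, hf'card⟩ := Finset.exists_subset_card_eq (hcard f hf)
  have hf'U : f' ⊆ U E := hf'sub.trans (subset_U E hf)
  classical
  set D : Finset (Omega E × (↥f' → Fin 2)) :=
    (G E S ∩ A E f j) ×ˢ (univ : Finset (↥f' → Fin 2)) with hD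
  have hcardD : D.card = (G E S ∩ A E f j).card * 2 ^ k := by
    rw [hD, Finset.card_product, Finset.card_univ, Fintype.card_fun, Fintype.card_coe,
      Fintype.card_fin, hf'card]
  rw [← hcardD]
  set Φ : Omega E × (↥f' → Fin 2) → Omega E :=
    fun q v => if h : ↑v ∈ f' then q.2 ⟨↑v, h⟩ else q.1 v with hΦ
  apply Finset.card_le_card_of_injOn Φ
  · -- maps to G S
    rintro ⟨x, y⟩ hq
    rw [hD, Finset.mem_coe, Finset.mem_product, Finset.mem_inter] at hq
    obtain ⟨⟨hxG, hxA⟩, -⟩ := hq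
    rw [Finset.mem_coe]
    rw [mem_G] at hxG ⊢
    rw [mem_A] at hxA
    intro p hp
    obtain ⟨v, hv, hne⟩ := hxG p hp
    have hvf' : ↑v ∉ f' := by
      intro hvf'
      rcases hS p hp with hj | hdisj
      · exact hne (by rw [hxA v (hf'sub hvf'), hj])
      · exact absurd (Finset.mem_inter.mpr ⟨hf'sub hvf', hv⟩) (by simp [hdisj])
    refine ⟨v, hv, ?_⟩
    simpa [hΦ, hvf'] using hne
  · -- injective on D
    rintro ⟨x, y⟩ hq ⟨x', y'⟩ hq' heq
    rw [Finset.mem_coe, Finset.mem_product, Finset.mem_inter] at hq hq'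
    obtain ⟨⟨-, hxA⟩, -⟩ := hq
    obtain ⟨⟨-, hxA'⟩, -⟩ := hq'
    rw [mem_A] at hxA hxA'
    have hx : x = x' := by
      funext v
      by_cases h : ↑v ∈ f'
      · exact (hxA v (hf'sub h)).trans (hxA' v (hf'sub h)).symm
      · have := congrFun heq v
        simpa [hΦ, h] using this
    have hy : y = y' := by
      funext w
      have hwU : ↑w ∈ U E := hf'U w.2
      have := congrFun heq ⟨↑w, hwU⟩
      simpa [hΦ, w.2] using this
    rw [Prod.ext_iff]
    exact ⟨hx, hy⟩


lemma key_ineq (d k : ℕ) (hineq : Real.exp 1 * ((d:ℝ)+2) ≤ 2^k) :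
    ((d:ℝ)+2) * ((2:ℝ)^k)⁻¹ ≤ (((d:ℝ)+1)/((d:ℝ)+2))^(d+1) := by
  have hD : (0:ℝ) < (d:ℝ) + 1 := by positivity
  have hD2 : (0:ℝ) < (d:ℝ) + 2 := by positivity
  have h2k : (0:ℝ) < (2:ℝ)^k := by positivity
  have hexp : (0:ℝ) < Real.exp 1 := Real.exp_pos 1
  have step1 : ((d:ℝ)+2)/((d:ℝ)+1) ≤ Real.exp (1/((d:ℝ)+1)) := by
    have h := Real.add_one_le_exp (1/((d:ℝ)+1))
    have : ((d:ℝ)+2)/((d:ℝ)+1) = 1/((d:ℝ)+1) + 1 := by field_simp; ring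
    linarith
  have step2 : (((d:ℝ)+2)/((d:ℝ)+1))^(d+1) ≤ Real.exp 1 := by
    calc (((d:ℝ)+2)/((d:ℝ)+1))^(d+1) ≤ (Real.exp (1/((d:ℝ)+1)))^(d+1) :=
          pow_le_pow_left₀ (by positivity) step1 _
    _ = Real.exp 1 := by
          rw [← Real.exp_nat_mul]
          congr 1
          push_cast
          field_simp
  have step3 : (((d:ℝ)+1)/((d:ℝ)+2))^(d+1) = ((((d:ℝ)+2)/((d:ℝ)+1))^(d+1))⁻¹ := by
    rw [← inv_pow, inv_div]
  calc ((d:ℝ)+2) * ((2:ℝ)^k)⁻¹ ≤ (Real.exp 1)⁻¹ := by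
        rw [← div_eq_mul_inv, div_le_iff₀ h2k, inv_mul_eq_div, le_div_iff₀ hexp, mul_comm]
        exact hineq
  _ ≤ ((((d:ℝ)+2)/((d:ℝ)+1))^(d+1))⁻¹ := inv_anti₀ (by positivity) step2
  _ = (((d:ℝ)+1)/((d:ℝ)+2))^(d+1) := step3.symm

lemma fin2_ne {a b : Fin 2} (h : a ≠ b) : a = (if b = 0 then 1 else 0) := by
  revert h; revert a b; decide

lemma main {k d : ℕ}
    (hcard : ∀ f ∈ E, k ≤ f.card)
    (hmeet : ∀ f ∈ E, (E.filter (fun g => g ≠ f ∧ (f ∩ g).Nonempty)).card ≤ d)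
    (hineq : Real.exp 1 * ((d : ℝ) + 2) ≤ 2 ^ k) :
    ∀ n (S : Finset (Finset V × Fin 2)), S.card ≤ n → S ⊆ E ×ˢ univ →
      ∀ f ∈ E, ∀ j, ((G E S ∩ A E f j).card : ℝ) * ((d:ℝ)+2) ≤ (G E S).card := by
  intro n
  induction n using Nat.strong_induction_on with
  | _ n IH =>
    intro S hScard hSsub f hf j
    classical
    set S₁ := S.filter (fun p => p.2 ≠ j ∧ (f ∩ p.1).Nonempty) with hS₁
    set S₂ := S.filter (fun p => ¬(p.2 ≠ j ∧ (f ∩ p.1).Nonempty)) with hS₂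
    have hUnion : S₂ ∪ S₁ = S := by
      rw [hS₁, hS₂, Finset.union_comm, Finset.filter_union_filter_not_eq]
    have hS₂subS : S₂ ⊆ S := Finset.filter_subset _ _
    have hS₁subS : S₁ ⊆ S := Finset.filter_subset _ _
    have hS₂compat : ∀ p ∈ S₂, p.2 = j ∨ f ∩ p.1 = ∅ := by
      intro p hp
      rw [hS₂, Finset.mem_filter] at hp
      by_cases hj : p.2 = j
      · exact Or.inl hj
      · right
        rw [← Finset.not_nonempty_iff_eq_empty]
        exact fun hne => hp.2 ⟨hj, hne⟩
    have hS₁card : S₁.card ≤ d + 1 := by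
      have hsub : S₁ ⊆ (insert f (E.filter (fun g => g ≠ f ∧ (f ∩ g).Nonempty))) ×ˢ
          ({if j = 0 then 1 else 0} : Finset (Fin 2)) := by
        intro p hp
        rw [hS₁, Finset.mem_filter] at hp
        obtain ⟨hpS, hpj, hpint⟩ := hp
        have hp1E : p.1 ∈ E := (Finset.mem_product.mp (hSsub hpS)).1
        rw [Finset.mem_product]
        refine ⟨?_, ?_⟩
        · by_cases hpf : p.1 = f
          · rw [hpf]; exact Finset.mem_insert_self _ _
          · exact Finset.mem_insert_of_mem
              (Finset.mem_filter.mpr ⟨hp1E, hpf, hpint⟩)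
        · simp only [Finset.mem_singleton]
          exact fin2_ne hpj
      calc S₁.card ≤ _ := Finset.card_le_card hsub
      _ ≤ (d + 1) * 1 := by
          rw [Finset.card_product, Finset.card_singleton]
          have h1 := Finset.card_insert_le f (E.filter (fun g => g ≠ f ∧ (f ∩ g).Nonempty))
          have h2 := hmeet f hf
          omega
      _ = d + 1 := by ring
    set r : ℝ := ((d:ℝ)+1)/((d:ℝ)+2) with hrdef
    have hr0 : (0:ℝ) < r := by rw [hrdef]; positivity
    have hr1 : r ≤ 1 := by
      rw [hrdef, div_le_one (by positivity)]; linarith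
    have hd2 : (0:ℝ) < (d:ℝ)+2 := by positivity
    -- peeling
    have peel : ∀ T : Finset (Finset V × Fin 2), T ⊆ S₁ →
        r ^ T.card * ((G E S₂).card : ℝ) ≤ ((G E (S₂ ∪ T)).card : ℝ) := by
      intro T
      induction T using Finset.induction_on with
      | empty => intro _; simp
      | @insert p T hp IH2 =>
        intro hsub
        have hTsub : T ⊆ S₁ := (Finset.subset_insert _ _).trans hsub
        have hpS₁ : p ∈ S₁ := hsub (Finset.mem_insert_self p T)
        have hWsub : S₂ ∪ T ⊆ E ×ˢ univ :=
          Finset.union_subset (hS₂subS.trans hSsub) ((hTsub.trans hS₁subS).trans hSsub)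
        have hdisj : Disjoint S₂ S₁ := by
          rw [hS₁, hS₂]
          exact (Finset.disjoint_filter_filter_not S S _).symm
        have hWcard : (S₂ ∪ T).card < n := by
          have h1 : (S₂ ∪ T).card ≤ S₂.card + T.card := Finset.card_union_le _ _
          have h2 : T.card + 1 ≤ S₁.card := by
            rw [← Finset.card_insert_of_notMem hp]
            exact Finset.card_le_card hsub
          have h3 : S₂.card + S₁.card = S.card := by
            rw [← Finset.card_union_of_disjoint hdisj, hUnion]
          omega
        have hp1E : p.1 ∈ E :=
          (Finset.mem_product.mp (hSsub (hS₁subS hpS₁))).1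
        have hIH := IH (S₂ ∪ T).card hWcard (S₂ ∪ T) le_rfl hWsub p.1 hp1E p.2
        have hcardins : ((G E (insert p (S₂ ∪ T))).card : ℝ)
            = ((G E (S₂ ∪ T)).card : ℝ) - ((G E (S₂ ∪ T) ∩ A E p.1 p.2).card : ℝ) := by
          rw [card_G_insert, Nat.cast_sub (Finset.card_le_card Finset.inter_subset_left)]
        have hgoal1 : r * ((G E (S₂ ∪ T)).card : ℝ) ≤ ((G E (insert p (S₂ ∪ T))).card : ℝ) := by
          rw [hcardins, hrdef, div_mul_eq_mul_div, div_le_iff₀ hd2]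
          nlinarith [hIH]
        rw [Finset.union_insert, Finset.card_insert_of_notMem hp, pow_succ]
        calc r ^ T.card * r * ((G E S₂).card : ℝ)
            = r * (r ^ T.card * ((G E S₂).card : ℝ)) := by ring
        _ ≤ r * ((G E (S₂ ∪ T)).card : ℝ) := by
            exact mul_le_mul_of_nonneg_left (IH2 hTsub) hr0.le
        _ ≤ _ := hgoal1
    -- base estimate
    have hbase := base E hcard hf j hS₂compat
    have hsubGA : (G E S ∩ A E f j) ⊆ (G E S₂ ∩ A E f j) :=
      Finset.inter_subset_inter (G_mono E (by rw [← hUnion]; exact Finset.subset_union_left))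
        Finset.Subset.rfl
    have h2k : (0:ℝ) < (2:ℝ)^k := by positivity
    have c1 : ((G E S ∩ A E f j).card : ℝ) ≤ ((G E S₂).card : ℝ) * ((2:ℝ)^k)⁻¹ := by
      have hb : ((G E S₂ ∩ A E f j).card : ℝ) * (2:ℝ)^k ≤ ((G E S₂).card : ℝ) := by
        exact_mod_cast hbase
      have hc : ((G E S ∩ A E f j).card : ℝ) ≤ ((G E S₂ ∩ A E f j).card : ℝ) := by
        exact_mod_cast Finset.card_le_card hsubGA
      rw [← div_eq_mul_inv, le_div_iff₀ h2k]
      calc ((G E S ∩ A E f j).card : ℝ) * (2:ℝ)^k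
          ≤ ((G E S₂ ∩ A E f j).card : ℝ) * (2:ℝ)^k :=
            mul_le_mul_of_nonneg_right hc h2k.le
      _ ≤ _ := hb
    -- combine everything
    have hkey := key_ineq d k hineq
    have hGS₂0 : (0:ℝ) ≤ ((G E S₂).card : ℝ) := Nat.cast_nonneg _
    calc ((G E S ∩ A E f j).card : ℝ) * ((d:ℝ)+2)
        ≤ (((G E S₂).card : ℝ) * ((2:ℝ)^k)⁻¹) * ((d:ℝ)+2) :=
          mul_le_mul_of_nonneg_right c1 hd2.le
    _ = ((G E S₂).card : ℝ) * (((d:ℝ)+2) * ((2:ℝ)^k)⁻¹) := by ring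
    _ ≤ ((G E S₂).card : ℝ) * r ^ (d+1) := mul_le_mul_of_nonneg_left hkey hGS₂0
    _ ≤ ((G E S₂).card : ℝ) * r ^ S₁.card := by
        exact mul_le_mul_of_nonneg_left (pow_le_pow_of_le_one hr0.le hr1 hS₁card) hGS₂0
    _ = r ^ S₁.card * ((G E S₂).card : ℝ) := by ring
    _ ≤ ((G E (S₂ ∪ S₁)).card : ℝ) := peel S₁ Finset.Subset.rfl
    _ = ((G E S).card : ℝ) := by rw [hUnion]

lemma G_pos {k d : ℕ}
    (hcard : ∀ f ∈ E, k ≤ f.card)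
    (hmeet : ∀ f ∈ E, (E.filter (fun g => g ≠ f ∧ (f ∩ g).Nonempty)).card ≤ d)
    (hineq : Real.exp 1 * ((d : ℝ) + 2) ≤ 2 ^ k) :
    ∀ S : Finset (Finset V × Fin 2), S ⊆ E ×ˢ univ → 0 < (G E S).card := by
  classical
  intro S
  induction S using Finset.induction_on with
  | empty =>
    intro _
    apply Finset.card_pos.mpr
    exact ⟨fun _ => 0, by simp [mem_G]⟩
  | @insert p S hp IHS =>
    intro hsub
    have hSsub : S ⊆ E ×ˢ univ := (Finset.subset_insert _ _).trans hsub
    have hp1E : p.1 ∈ E := (Finset.mem_product.mp (hsub (Finset.mem_insert_self p S))).1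
    have hmain := main E hcard hmeet hineq S.card S le_rfl hSsub p.1 hp1E p.2
    have hpos := IHS hSsub
    have hd2 : (0:ℝ) < (d:ℝ)+2 := by positivity
    have hcardins : ((G E (insert p S)).card : ℝ)
        = ((G E S).card : ℝ) - ((G E S ∩ A E p.1 p.2).card : ℝ) := by
      rw [card_G_insert, Nat.cast_sub (Finset.card_le_card Finset.inter_subset_left)]
    have hposR : (0:ℝ) < ((G E S).card : ℝ) := by exact_mod_cast hpos
    have : (0:ℝ) < ((G E (insert p S)).card : ℝ) := by
      rw [hcardins]
      nlinarith [hmain]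
    exact_mod_cast this

end McDLLL


/-- **Theorem (McDiarmid 1997).** Let `H` be a hypergraph in which every edge
contains at least `k` vertices and meets at most `d` other edges.
If `e(d+2) ≤ 2^k` then `H` has a 2-coloring, i.e. there is a coloring of the
vertices with 2 colors such that no edge is monochromatic. -/
theorem hypergraph_two_coloring_McDiarmid {V : Type*} [DecidableEq V]
    (E : Finset (Finset V)) (k d : ℕ)
    (hcard : ∀ f ∈ E, k ≤ f.card)
    (hmeet : ∀ f ∈ E, (E.filter (fun g => g ≠ f ∧ (f ∩ g).Nonempty)).card ≤ d)
    (hineq : Real.exp 1 * ((d : ℝ) + 2) ≤ 2 ^ k) :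
    ∃ c : V → Fin 2, ∀ f ∈ E, ∃ v ∈ f, ∃ w ∈ f, c v ≠ c w := by
  classical
  open McDLLL in
  have hpos := McDLLL.G_pos E hcard hmeet hineq (E ×ˢ univ) Finset.Subset.rfl
  obtain ⟨x, hx⟩ := Finset.card_pos.mp hpos
  rw [McDLLL.mem_G] at hx
  refine ⟨fun v => if h : v ∈ McDLLL.U E then x ⟨v, h⟩ else 0, ?_⟩
  intro f hf
  have h0 := hx (f, 0) (Finset.mem_product.mpr ⟨hf, Finset.mem_univ _⟩)
  have h1 := hx (f, 1) (Finset.mem_product.mpr ⟨hf, Finset.mem_univ _⟩)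
  obtain ⟨v, hv, hvne⟩ := h0
  obtain ⟨w, hw, hwne⟩ := h1
  have hf2 : ∀ a : Fin 2, a ≠ 0 → a = 1 := by decide
  have hf2' : ∀ a : Fin 2, a ≠ 1 → a = 0 := by decide
  have hveq : x v = 1 := hf2 _ hvne
  have hweq : x w = 0 := hf2' _ hwne
  refine ⟨↑v, hv, ↑w, hw, ?_⟩
  have hvU : (↑v : V) ∈ McDLLL.U E := v.2
  have hwU : (↑w : V) ∈ McDLLL.U E := w.2
  simp only [dif_pos hvU, dif_pos hwU]
  rw [Subtype.coe_eta, Subtype.coe_eta, hveq, hweq]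
  decide
end

section
/- Let $H$ be a hypergraph in which every edge contains at least $k$ vertices and meets (i.e., intersects) at most $d$ other edges. Let $t \geq 2$ be an integer. If $e (1 - 1/t)^{k} ((d+1)(t-1) + 1) \leq 1$ (where $e$ is Euler's number), then $H$ has a $t$-coloring, i.e., there exists a coloring of the vertices of $H$ with $t$ colors such that every color appears on every edge at least once. -/
open Finset

lemma indep_card {α β : Type*} [Fintype α] [DecidableEq α] [Fintype β] [DecidableEq β]
    (u : Finset α) (P Q : Finset (α → β))
    (hP : ∀ ω ω' : α → β, (∀ a ∈ u, ω a = ω' a) → (ω ∈ P ↔ ω' ∈ P))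
    (hQ : ∀ ω ω' : α → β, (∀ a ∉ u, ω a = ω' a) → (ω ∈ Q ↔ ω' ∈ Q)) :
    (P ∩ Q).card * Fintype.card (α → β) = P.card * Q.card := by
  classical
  have key : ((P ∩ Q) ×ˢ (univ : Finset (α → β))).card = (P ×ˢ Q).card := by
    apply Finset.card_nbij'
      (i := fun ωσ => (fun a => if a ∈ u then ωσ.1 a else ωσ.2 a,
                       fun a => if a ∈ u then ωσ.2 a else ωσ.1 a))
      (j := fun ωσ => (fun a => if a ∈ u then ωσ.1 a else ωσ.2 a,
                       fun a => if a ∈ u then ωσ.2 a else ωσ.1 a))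
    · intro ωσ h
      simp only [mem_coe, mem_product, mem_inter, mem_univ, and_true] at h ⊢
      constructor
      · exact (hP _ ωσ.1 (fun a ha => by simp [ha])).mpr h.1
      · exact (hQ _ ωσ.1 (fun a ha => by simp [ha])).mpr h.2
    · intro ωσ h
      simp only [mem_coe, mem_product, mem_inter, mem_univ, and_true] at h ⊢
      refine ⟨(hP _ ωσ.1 (fun a ha => by simp [ha])).mpr h.1,
        (hQ _ ωσ.2 (fun a ha => by simp [ha])).mpr h.2⟩
    · intro ωσ _
      ext a
      · simp only; split <;> simp_all
      · simp only; split <;> simp_all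
    · intro ωσ _
      ext a
      · simp only; split <;> simp_all
      · simp only; split <;> simp_all
  rw [Finset.card_product, Finset.card_product, Finset.card_univ] at key
  linarith [key]

lemma lll {Ω ι : Type*} [Fintype Ω] [DecidableEq Ω] [Fintype ι] [DecidableEq ι]
    (A : ι → Finset Ω) (Γ : ι → Finset ι) (x : ι → ℝ)
    (hx0 : ∀ i, 0 ≤ x i) (hx1 : ∀ i, x i < 1)
    (hΩ : 0 < Fintype.card Ω)
    (h1 : ∀ i, ∀ S : Finset ι, (∀ j ∈ S, j ∉ Γ i) →
        ((A i ∩ univ.filter (fun ω => ∀ j ∈ S, ω ∉ A j)).card : ℝ) * Fintype.card Ω ≤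
          ((A i).card : ℝ) * ((univ.filter (fun ω => ∀ j ∈ S, ω ∉ A j)).card : ℝ))
    (h2 : ∀ i, ((A i).card : ℝ) ≤ x i * (∏ j ∈ Γ i, (1 - x j)) * Fintype.card Ω) :
    ∃ ω : Ω, ∀ i, ω ∉ A i := by
  classical
  set NS : Finset ι → Finset Ω := fun S => univ.filter (fun ω => ∀ j ∈ S, ω ∉ A j) with hNS
  have hNSanti : ∀ {S S' : Finset ι}, S ⊆ S' → NS S' ⊆ NS S := by
    intro S S' hss ω hω
    simp only [hNS, mem_filter, mem_univ, true_and] at hω ⊢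
    exact fun j hj => hω j (hss hj)
  have hNSinsert : ∀ (a : ι) (S : Finset ι),
      ((NS (insert a S)).card : ℝ) = ((NS S).card : ℝ) - ((A a ∩ NS S).card : ℝ) := by
    intro a S
    have : NS (insert a S) = NS S \ A a := by
      ext ω
      simp only [hNS, mem_filter, mem_univ, true_and, mem_sdiff, Finset.mem_insert]
      constructor
      · intro h; exact ⟨fun j hj => h j (Or.inr hj), h a (Or.inl rfl)⟩
      · rintro ⟨h1, h2⟩ j (rfl | hj)
        · exact h2
        · exact h1 j hj
    rw [this, inter_comm]
    have := Finset.card_inter_add_card_sdiff (NS S) (A a)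
    push_cast [← this]
    ring
  have hprod_nonneg : ∀ S : Finset ι, (0:ℝ) ≤ ∏ j ∈ S, (1 - x j) :=
    fun S => Finset.prod_nonneg (fun j _ => by linarith [hx1 j])
  have hprod_le_one : ∀ S : Finset ι, (∏ j ∈ S, (1 - x j)) ≤ 1 :=
    fun S => Finset.prod_le_one (fun j _ => by linarith [hx1 j]) (fun j _ => by linarith [hx0 j])
  -- main claim
  have claim : ∀ n : ℕ, ∀ S : Finset ι, S.card ≤ n → ∀ i, i ∉ S →
      ((A i ∩ NS S).card : ℝ) ≤ x i * ((NS S).card : ℝ) := by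
    intro n
    induction n with
    | zero =>
      intro S hS i _
      have hS0 : S = ∅ := Finset.card_eq_zero.mp (Nat.le_zero.mp hS)
      subst hS0
      have hNSempty : NS (∅ : Finset ι) = univ := by
        ext ω; simp [hNS]
      rw [hNSempty]
      rw [Finset.inter_comm, Finset.univ_inter, Finset.card_univ]
      calc ((A i).card : ℝ) ≤ x i * (∏ j ∈ Γ i, (1 - x j)) * Fintype.card Ω := h2 i
        _ ≤ x i * 1 * Fintype.card Ω := by
            apply mul_le_mul_of_nonneg_right _ (by positivity)
            exact mul_le_mul_of_nonneg_left (hprod_le_one _) (hx0 i)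
        _ = x i * Fintype.card Ω := by ring
    | succ n ih =>
      intro S hS i hi
      set S1 : Finset ι := S ∩ Γ i with hS1
      set S2 : Finset ι := S \ Γ i with hS2
      have hS2Γ : ∀ j ∈ S2, j ∉ Γ i := fun j hj => (Finset.mem_sdiff.mp hj).2
      have hunion : S2 ∪ S1 = S := Finset.sdiff_union_inter S (Γ i)
      -- E claim
      have hE : ∀ T : Finset ι, T ⊆ S1 →
          (∏ j ∈ T, (1 - x j)) * ((NS S2).card : ℝ) ≤ ((NS (S2 ∪ T)).card : ℝ) := by
        intro T
        induction T using Finset.induction_on with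
        | empty => intro _; simp
        | @insert a T ha ihT =>
          intro hsub
          have haS1 : a ∈ S1 := hsub (Finset.mem_insert_self a T)
          have hTsub : T ⊆ S1 := fun b hb => hsub (Finset.mem_insert_of_mem hb)
          have haT : a ∉ S2 ∪ T := by
            intro h
            rcases Finset.mem_union.mp h with h | h
            · exact (Finset.mem_sdiff.mp h).2 (Finset.mem_inter.mp haS1).2
            · exact ha h
          have hcards : (S2 ∪ T).card ≤ n := by
            have hsubS : S2 ∪ T ⊆ S := by
              apply Finset.union_subset (Finset.sdiff_subset)
              exact hTsub.trans (Finset.inter_subset_left)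
            have hss : S2 ∪ T ⊂ S := by
              refine Finset.ssubset_iff_of_subset hsubS |>.mpr ⟨a, ?_, haT⟩
              exact (Finset.mem_inter.mp haS1).1
            have := Finset.card_lt_card hss
            omega
          have hih := ih (S2 ∪ T) hcards a haT
          have heq : S2 ∪ insert a T = insert a (S2 ∪ T) := by
            rw [Finset.union_insert]
          rw [heq, hNSinsert a (S2 ∪ T)]
          have h1a : (1 - x a) * ((NS (S2 ∪ T)).card : ℝ) ≤
              ((NS (S2 ∪ T)).card : ℝ) - ((A a ∩ NS (S2 ∪ T)).card : ℝ) := by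
            nlinarith [hih]
          calc (∏ j ∈ insert a T, (1 - x j)) * ((NS S2).card : ℝ)
              = (1 - x a) * ((∏ j ∈ T, (1 - x j)) * ((NS S2).card : ℝ)) := by
                rw [Finset.prod_insert ha]; ring
            _ ≤ (1 - x a) * ((NS (S2 ∪ T)).card : ℝ) := by
                apply mul_le_mul_of_nonneg_left (ihT hTsub) (by linarith [hx1 a])
            _ ≤ _ := h1a
      have hE1 := hE S1 (Finset.Subset.refl S1)
      rw [hunion] at hE1
      -- chains
      have hmono : ((A i ∩ NS S).card : ℝ) ≤ ((A i ∩ NS S2).card : ℝ) := by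
        have : A i ∩ NS S ⊆ A i ∩ NS S2 :=
          Finset.inter_subset_inter (Finset.Subset.refl _) (hNSanti Finset.sdiff_subset)
        exact_mod_cast Finset.card_le_card this
      have hh1 := h1 i S2 hS2Γ
      have hΩR : (0:ℝ) < Fintype.card Ω := by exact_mod_cast hΩ
      have step1 : ((A i ∩ NS S2).card : ℝ) ≤ x i * (∏ j ∈ Γ i, (1 - x j)) * ((NS S2).card : ℝ) := by
        rw [← mul_le_mul_iff_of_pos_right hΩR]
        calc ((A i ∩ NS S2).card : ℝ) * Fintype.card Ω
            ≤ ((A i).card : ℝ) * ((NS S2).card : ℝ) := hh1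
          _ ≤ (x i * (∏ j ∈ Γ i, (1 - x j)) * Fintype.card Ω) * ((NS S2).card : ℝ) := by
              apply mul_le_mul_of_nonneg_right (h2 i) (by positivity)
          _ = x i * (∏ j ∈ Γ i, (1 - x j)) * ((NS S2).card : ℝ) * Fintype.card Ω := by ring
      have hprodS1 : (∏ j ∈ Γ i, (1 - x j)) ≤ ∏ j ∈ S1, (1 - x j) := by
        have hsub : S1 ⊆ Γ i := Finset.inter_subset_right
        rw [← Finset.prod_sdiff hsub]
        have h1' : (∏ j ∈ Γ i \ S1, (1 - x j)) ≤ 1 := hprod_le_one _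
        nlinarith [hprod_nonneg S1, hprod_nonneg (Γ i \ S1)]
      calc ((A i ∩ NS S).card : ℝ) ≤ ((A i ∩ NS S2).card : ℝ) := hmono
        _ ≤ x i * (∏ j ∈ Γ i, (1 - x j)) * ((NS S2).card : ℝ) := step1
        _ ≤ x i * ((∏ j ∈ S1, (1 - x j)) * ((NS S2).card : ℝ)) := by
            rw [mul_assoc]
            apply mul_le_mul_of_nonneg_left _ (hx0 i)
            exact mul_le_mul_of_nonneg_right hprodS1 (by positivity)
        _ ≤ x i * ((NS S).card : ℝ) := mul_le_mul_of_nonneg_left hE1 (hx0 i)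
  -- lower bound
  have hlow : ∀ T : Finset ι, (∏ j ∈ T, (1 - x j)) * (Fintype.card Ω : ℝ) ≤ ((NS T).card : ℝ) := by
    intro T
    induction T using Finset.induction_on with
    | empty =>
      have : NS (∅ : Finset ι) = univ := by ext ω; simp [hNS]
      simp [this]
    | @insert a T ha ihT =>
      have hc := claim T.card T le_rfl a ha
      rw [hNSinsert a T, Finset.prod_insert ha]
      have h0 : (0:ℝ) ≤ 1 - x a := by linarith [hx1 a]
      nlinarith [hprod_nonneg T, show (0:ℝ) ≤ (Fintype.card Ω : ℝ) by positivity]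
  have hfinal := hlow univ
  have hpos : (0:ℝ) < ((NS univ).card : ℝ) := by
    have : (0:ℝ) < (∏ j ∈ univ, (1 - x j)) * (Fintype.card Ω : ℝ) := by
      apply mul_pos (Finset.prod_pos (fun j _ => by linarith [hx1 j]))
      exact_mod_cast hΩ
    linarith
  have : (NS univ).Nonempty := Finset.card_pos.mp (by exact_mod_cast hpos)
  obtain ⟨ω, hω⟩ := this
  simp only [hNS, mem_filter, mem_univ, true_and] at hω
  exact ⟨ω, fun i => hω i trivial⟩

set_option maxHeartbeats 1600000 in
/-- **Theorem (McDiarmid 1997).** Let `H` be a hypergraph in which every edge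
contains at least `k` vertices and meets at most `d` other edges, and let `t ≥ 2`.
If `e (1-1/t)^k ((d+1)(t-1)+1) ≤ 1` then `H` has a `t`-coloring,
i.e. there is a coloring of the vertices with `t` colors such that every color
appears on every edge at least once. -/
theorem hypergraph_t_coloring {V : Type*} [DecidableEq V]
    (E : Finset (Finset V)) (k d t : ℕ) (ht : 2 ≤ t)
    (hcard : ∀ f ∈ E, k ≤ f.card)
    (hmeet : ∀ f ∈ E, (E.filter (fun g => g ≠ f ∧ (f ∩ g).Nonempty)).card ≤ d)
    (hineq : Real.exp 1 * (1 - 1 / (t : ℝ)) ^ k *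
        (((d : ℝ) + 1) * ((t : ℝ) - 1) + 1) ≤ 1) :
    ∃ c : V → Fin t, ∀ f ∈ E, ∀ i : Fin t, ∃ v ∈ f, c v = i := by
  classical
  -- numeric setup
  set D : ℕ := (d + 1) * (t - 1) with hD
  have hD1 : 1 ≤ D := by
    rw [hD]
    exact Nat.one_le_iff_ne_zero.mpr (Nat.mul_ne_zero (by omega) (by omega))
  have htR : (2:ℝ) ≤ (t:ℝ) := by exact_mod_cast ht
  have hDcast : ((d : ℝ) + 1) * ((t : ℝ) - 1) + 1 = (D:ℝ) + 1 := by
    have : ((t - 1 : ℕ) : ℝ) = (t:ℝ) - 1 := by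
      rw [Nat.cast_sub (by omega)]; simp
    rw [hD]; push_cast [this]; ring
  set c : ℝ := 1 / ((D:ℝ) + 1) with hc
  have hDpos : (0:ℝ) < (D:ℝ) := by exact_mod_cast hD1
  have hc0 : 0 ≤ c := by positivity
  have hc1 : c < 1 := by
    rw [hc, div_lt_one (by positivity)]; linarith
  -- probability bound
  have hbase0 : (0:ℝ) ≤ 1 - 1/(t:ℝ) := by
    have : 1/(t:ℝ) ≤ 1 := by rw [div_le_one (by linarith)]; linarith
    linarith
  have hbase1 : 1 - 1/(t:ℝ) ≤ 1 := by
    have : (0:ℝ) ≤ 1/(t:ℝ) := by positivity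
    linarith
  have hexp_pos : (0:ℝ) < Real.exp 1 := Real.exp_pos 1
  have hpk : (1 - 1/(t:ℝ))^k ≤ 1 / (Real.exp 1 * ((D:ℝ) + 1)) := by
    rw [le_div_iff₀ (by positivity)]
    calc (1 - 1/(t:ℝ))^k * (Real.exp 1 * ((D:ℝ)+1))
        = Real.exp 1 * (1 - 1/(t:ℝ))^k * (((d:ℝ)+1) * ((t:ℝ)-1) + 1) := by rw [hDcast]; ring
      _ ≤ 1 := hineq
  have hkey : 1 / (Real.exp 1 * ((D:ℝ) + 1)) ≤ c * (1 - c)^D := by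
    have h1c : 1 - c = (D:ℝ) / ((D:ℝ) + 1) := by
      rw [hc]; field_simp; ring
    have hebound : ((D:ℝ) + 1) / (D:ℝ) ≤ Real.exp (1 / (D:ℝ)) := by
      have := Real.add_one_le_exp (1 / (D:ℝ))
      have : (D:ℝ) ≠ 0 := by positivity
      calc ((D:ℝ) + 1) / (D:ℝ) = 1/(D:ℝ) + 1 := by field_simp; ring
        _ ≤ Real.exp (1 / (D:ℝ)) := Real.add_one_le_exp _
    have hebound2 : (((D:ℝ) + 1) / (D:ℝ))^D ≤ Real.exp 1 := by
      calc (((D:ℝ) + 1) / (D:ℝ))^D ≤ (Real.exp (1 / (D:ℝ)))^D := by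
            apply pow_le_pow_left₀ (by positivity) hebound
        _ = Real.exp ((D:ℕ) * (1/(D:ℝ))) := by rw [Real.exp_nat_mul]
        _ = Real.exp 1 := by
            congr 1
            field_simp
    have hDdiv_pos : (0:ℝ) < (D:ℝ)/((D:ℝ)+1) := by positivity
    have hinvpow : ((D:ℝ)/((D:ℝ)+1))^D = 1 / (((D:ℝ)+1)/(D:ℝ))^D := by
      rw [one_div, ← inv_pow]
      congr 1
      rw [inv_div]
    have hstep : 1 / Real.exp 1 ≤ ((D:ℝ)/((D:ℝ)+1))^D := by
      rw [hinvpow]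
      apply one_div_le_one_div_of_le (by positivity) hebound2
    rw [h1c, hc]
    calc 1 / (Real.exp 1 * ((D:ℝ)+1)) = (1/((D:ℝ)+1)) * (1/Real.exp 1) := by
          field_simp
      _ ≤ (1/((D:ℝ)+1)) * ((D:ℝ)/((D:ℝ)+1))^D := by
          apply mul_le_mul_of_nonneg_left hstep (by positivity)
  -- setup types
  set U : Finset V := E.biUnion id with hU
  have hfU : ∀ f ∈ E, f ⊆ U := fun f hf v hv => Finset.mem_biUnion.mpr ⟨f, hf, hv⟩
  haveI : NeZero t := ⟨by omega⟩
  set n : ℕ := Fintype.card {v // v ∈ U} with hn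
  let ιt := {f // f ∈ E} × Fin t
  let A : ιt → Finset ({v // v ∈ U} → Fin t) := fun p =>
    univ.filter (fun ω => ∀ a : {v // v ∈ U}, a.1 ∈ p.1.1 → ω a ≠ p.2)
  let Γ : ιt → Finset ιt := fun p =>
    ((univ : Finset {f // f ∈ E}).filter fun g => (p.1.1 ∩ g.1).Nonempty) ×ˢ ({p.2}ᶜ)
  have hΩcard : Fintype.card ({v // v ∈ U} → Fin t) = t ^ n := by
    rw [Fintype.card_fun, Fintype.card_fin, hn]
  have hΩpos : 0 < Fintype.card ({v // v ∈ U} → Fin t) := by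
    rw [hΩcard]; positivity
  -- Γ card bound
  have hΓcard : ∀ p : ιt, (Γ p).card ≤ D := by
    intro p
    have hΓeq : (Γ p).card =
        ((univ : Finset {f // f ∈ E}).filter fun g => (p.1.1 ∩ g.1).Nonempty).card * ({p.2}ᶜ : Finset (Fin t)).card :=
      Finset.card_product _ _
    have hTcard : ((univ : Finset {f // f ∈ E}).filter fun g => (p.1.1 ∩ g.1).Nonempty).card
        = (E.filter fun g => (p.1.1 ∩ g).Nonempty).card := by
      apply Finset.card_nbij (i := fun g => g.1)
      · intro g hg
        simp only [mem_coe, mem_filter, mem_univ, true_and] at hg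
        simp only [mem_coe, mem_filter]
        exact ⟨g.2, hg⟩
      · intro g _ g' _ h
        exact Subtype.ext h
      · intro g hg
        simp only [mem_coe, mem_filter] at hg
        exact ⟨⟨g, hg.1⟩, by simp [hg.2], rfl⟩
    have hTle : (E.filter fun g => (p.1.1 ∩ g).Nonempty).card ≤ d + 1 := by
      have hsub : E.filter (fun g => (p.1.1 ∩ g).Nonempty) ⊆
          insert p.1.1 (E.filter fun g => g ≠ p.1.1 ∧ (p.1.1 ∩ g).Nonempty) := by
        intro g hg
        rw [mem_filter] at hg
        rcases eq_or_ne g p.1.1 with h | h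
        · exact h ▸ Finset.mem_insert_self _ _
        · exact Finset.mem_insert_of_mem (Finset.mem_filter.mpr ⟨hg.1, h, hg.2⟩)
      calc (E.filter fun g => (p.1.1 ∩ g).Nonempty).card
          ≤ (insert p.1.1 (E.filter fun g => g ≠ p.1.1 ∧ (p.1.1 ∩ g).Nonempty)).card :=
            Finset.card_le_card hsub
        _ ≤ (E.filter fun g => g ≠ p.1.1 ∧ (p.1.1 ∩ g).Nonempty).card + 1 :=
            Finset.card_insert_le _ _
        _ ≤ d + 1 := by
            have := hmeet p.1.1 p.1.2
            omega
    have hcompl : ({p.2}ᶜ : Finset (Fin t)).card = t - 1 := by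
      rw [Finset.card_compl, Finset.card_singleton, Fintype.card_fin]
    rw [hΓeq, hTcard, hcompl, hD]
    exact Nat.mul_le_mul_right _ hTle
  -- A card computation
  have hAcard : ∀ p : ιt, ((A p).card : ℝ) = ((t:ℝ) - 1)^(p.1.1.card) * (t:ℝ)^(n - p.1.1.card) := by
    intro p
    have hApi : A p = Fintype.piFinset
        (fun a : {v // v ∈ U} => if (a:V) ∈ p.1.1 then ({p.2}ᶜ : Finset (Fin t)) else univ) := by
      ext ω
      simp only [A, mem_filter, mem_univ, true_and, Fintype.mem_piFinset]
      constructor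
      · intro h a
        by_cases hf' : (a:V) ∈ p.1.1
        · simp [hf', h a hf']
        · simp [hf']
      · intro h a ha
        have := h a
        rw [if_pos ha] at this
        simpa using this
    have hcards : ∀ a : {v // v ∈ U},
        ((if (a:V) ∈ p.1.1 then ({p.2}ᶜ : Finset (Fin t)) else univ).card)
          = if (a:V) ∈ p.1.1 then t - 1 else t := by
      intro a
      split <;> simp [Finset.card_compl]
    have hm1 : (univ.filter fun a : {v // v ∈ U} => (a:V) ∈ p.1.1).card = p.1.1.card := by
      apply Finset.card_nbij (i := fun a : {v // v ∈ U} => (a : V))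
      · intro a ha
        simp only [mem_coe, mem_filter, mem_univ, true_and] at ha
        simpa using ha
      · intro a _ a' _ h
        exact Subtype.ext h
      · intro v hv
        simp only [mem_coe] at hv
        exact ⟨⟨v, hfU p.1.1 p.1.2 hv⟩, by simp [hv], rfl⟩
    have hm1' : (univ.filter fun a : {v // v ∈ U} => ¬ ((a:V) ∈ p.1.1)).card = n - p.1.1.card := by
      rw [Finset.filter_not, Finset.card_sdiff_of_subset (Finset.filter_subset _ _), Finset.card_univ, hm1]
    have hnat : (A p).card = (t - 1) ^ p.1.1.card * t ^ (n - p.1.1.card) := by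
      rw [hApi, Fintype.card_piFinset]
      rw [Finset.prod_congr rfl (fun a _ => hcards a)]
      rw [Finset.prod_ite, Finset.prod_const, Finset.prod_const, hm1, hm1']
    rw [hnat]
    have ht1 : 1 ≤ t := by omega
    push_cast [Nat.cast_sub ht1]
    ring
  -- h2
  have h2 : ∀ p : ιt, ((A p).card : ℝ) ≤ c * (∏ j ∈ Γ p, (1 - c)) * Fintype.card ({v // v ∈ U} → Fin t) := by
    intro p
    have ht0 : (0:ℝ) < (t:ℝ) := by linarith
    have hm : k ≤ p.1.1.card := hcard _ p.1.2
    have hmn : p.1.1.card ≤ n := by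
      rw [hn, Fintype.card_coe]
      exact Finset.card_le_card (hfU _ p.1.2)
    set m := p.1.1.card with hmdef
    have hsplit : ((t:ℝ) - 1)^m * (t:ℝ)^(n - m) = (1 - 1/(t:ℝ))^m * (t:ℝ)^n := by
      have htn : (t:ℝ)^n = (t:ℝ)^m * (t:ℝ)^(n-m) := by
        rw [← pow_add]
        congr 1
        omega
      have h1t : (1 - 1/(t:ℝ)) = ((t:ℝ) - 1) / t := by
        field_simp
      rw [h1t, htn, div_pow]
      field_simp
    have hγ : (Γ p).card ≤ D := hΓcard p
    have hpow1 : (1 - 1/(t:ℝ))^m ≤ (1 - 1/(t:ℝ))^k :=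
      pow_le_pow_of_le_one hbase0 hbase1 hm
    have hpow2 : (1 - c)^D ≤ (1 - c)^((Γ p).card) :=
      pow_le_pow_of_le_one (by linarith) (by linarith) hγ
    have htn_pos : (0:ℝ) < (t:ℝ)^n := by positivity
    rw [hAcard p, hΩcard, Finset.prod_const]
    push_cast
    rw [← hmdef, hsplit]
    calc (1 - 1/(t:ℝ))^m * (t:ℝ)^n
        ≤ (1 - 1/(t:ℝ))^k * (t:ℝ)^n := by
          apply mul_le_mul_of_nonneg_right hpow1 (le_of_lt htn_pos)
      _ ≤ (1 / (Real.exp 1 * ((D:ℝ) + 1))) * (t:ℝ)^n := by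
          apply mul_le_mul_of_nonneg_right hpk (le_of_lt htn_pos)
      _ ≤ (c * (1 - c)^D) * (t:ℝ)^n := by
          apply mul_le_mul_of_nonneg_right hkey (le_of_lt htn_pos)
      _ ≤ (c * (1 - c)^((Γ p).card)) * (t:ℝ)^n := by
          apply mul_le_mul_of_nonneg_right _ (le_of_lt htn_pos)
          exact mul_le_mul_of_nonneg_left hpow2 hc0
  -- h1
  have h1 : ∀ p : ιt, ∀ S : Finset ιt, (∀ q ∈ S, q ∉ Γ p) →
      ((A p ∩ univ.filter (fun ω => ∀ q ∈ S, ω ∉ A q)).card : ℝ) * Fintype.card ({v // v ∈ U} → Fin t) ≤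
        ((A p).card : ℝ) * ((univ.filter (fun ω => ∀ q ∈ S, ω ∉ A q)).card : ℝ) := by
    intro p S hS
    set NSS := (univ : Finset ({v // v ∈ U} → Fin t)).filter (fun ω => ∀ q ∈ S, ω ∉ A q) with hNSS
    set M := (univ : Finset ({v // v ∈ U} → Fin t)).filter
      (fun ω => ∀ q ∈ S, ∃ a : {v // v ∈ U}, (a:V) ∈ q.1.1 ∧ (a:V) ∉ p.1.1 ∧ ω a = q.2) with hM
    have hq : ∀ q ∈ S, q.2 = p.2 ∨ (p.1.1 ∩ q.1.1) = ∅ := by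
      intro q hqS
      have hnot := hS q hqS
      by_cases hne : (p.1.1 ∩ q.1.1).Nonempty
      · left
        by_contra hne2
        apply hnot
        have h1m : q.1 ∈ (univ : Finset {f // f ∈ E}).filter (fun g => (p.1.1 ∩ g.1).Nonempty) :=
          Finset.mem_filter.mpr ⟨Finset.mem_univ _, hne⟩
        have h2m : q.2 ∈ ({p.2}ᶜ : Finset (Fin t)) :=
          Finset.mem_compl.mpr (by simpa using hne2)
        have : q ∈ ((univ : Finset {f // f ∈ E}).filter
            (fun g => (p.1.1 ∩ g.1).Nonempty)) ×ˢ ({p.2}ᶜ : Finset (Fin t)) :=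
          Finset.mem_product.mpr ⟨h1m, h2m⟩
        exact this
      · right
        exact Finset.not_nonempty_iff_eq_empty.mp hne
    have hkeyset : A p ∩ NSS = A p ∩ M := by
      ext ω
      simp only [Finset.mem_inter]
      constructor
      · rintro ⟨hA, hN⟩
        refine ⟨hA, ?_⟩
        simp only [hM, mem_filter, mem_univ, true_and]
        intro q hqS
        have hωq : ω ∉ A q := by
          simp only [hNSS, mem_filter, mem_univ, true_and] at hN
          exact hN q hqS
        simp only [A, mem_filter, mem_univ, true_and, not_forall] at hωq
        obtain ⟨a, ha⟩ := hωq
        push_neg at ha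
        obtain ⟨hag, haj⟩ := ha
        refine ⟨a, hag, ?_, haj⟩
        intro haf
        have hAa : ω a ≠ p.2 := by
          simp only [A, mem_filter, mem_univ, true_and] at hA
          exact hA a haf
        rcases hq q hqS with h | h
        · rw [haj] at hAa; exact hAa h
        · have hmem : (a:V) ∈ p.1.1 ∩ q.1.1 := Finset.mem_inter.mpr ⟨haf, hag⟩
          rw [h] at hmem
          exact absurd hmem (Finset.notMem_empty _)
      · rintro ⟨hA, hMm⟩
        refine ⟨hA, ?_⟩
        simp only [hNSS, mem_filter, mem_univ, true_and]
        intro q hqS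
        simp only [hM, mem_filter, mem_univ, true_and] at hMm
        obtain ⟨a, hag, -, haj⟩ := hMm q hqS
        simp only [A, mem_filter, mem_univ, true_and, not_forall]
        exact ⟨a, by push_neg; exact ⟨hag, haj⟩⟩
    have hMN : M ⊆ NSS := by
      intro ω hω
      simp only [hM, mem_filter, mem_univ, true_and] at hω
      simp only [hNSS, mem_filter, mem_univ, true_and]
      intro q hqS
      obtain ⟨a, hag, -, haj⟩ := hω q hqS
      simp only [A, mem_filter, mem_univ, true_and, not_forall]
      exact ⟨a, by push_neg; exact ⟨hag, haj⟩⟩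
    have hindep := indep_card (univ.filter fun a : {v // v ∈ U} => (a:V) ∈ p.1.1) (A p) M
      (by
        intro ω ω' hagree
        simp only [A, mem_filter, mem_univ, true_and]
        have hval : ∀ a : {v // v ∈ U}, (a:V) ∈ p.1.1 → ω a = ω' a := by
          intro a haf
          exact hagree a (Finset.mem_filter.mpr ⟨Finset.mem_univ a, haf⟩)
        constructor
        · intro h a haf
          rw [← hval a haf]
          exact h a haf
        · intro h a haf
          rw [hval a haf]
          exact h a haf)
      (by
        intro ω ω' hagree
        simp only [hM, mem_filter, mem_univ, true_and]
        have hval : ∀ a : {v // v ∈ U}, (a:V) ∉ p.1.1 → ω a = ω' a := by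
          intro a haf
          refine hagree a ?_
          simp only [mem_filter, mem_univ, true_and]
          exact haf
        constructor
        · intro h q hqS
          obtain ⟨a, hag, hanf, haj⟩ := h q hqS
          exact ⟨a, hag, hanf, by rw [← hval a hanf]; exact haj⟩
        · intro h q hqS
          obtain ⟨a, hag, hanf, haj⟩ := h q hqS
          exact ⟨a, hag, hanf, by rw [hval a hanf]; exact haj⟩)
    calc ((A p ∩ NSS).card : ℝ) * Fintype.card ({v // v ∈ U} → Fin t)
        = ((A p ∩ M).card : ℝ) * Fintype.card ({v // v ∈ U} → Fin t) := by rw [hkeyset]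
      _ = ((A p).card : ℝ) * (M.card : ℝ) := by exact_mod_cast hindep
      _ ≤ ((A p).card : ℝ) * (NSS.card : ℝ) := by
          apply mul_le_mul_of_nonneg_left _ (Nat.cast_nonneg _)
          exact_mod_cast Finset.card_le_card hMN
  obtain ⟨ω, hω⟩ := lll A Γ (fun _ => c) (fun _ => hc0) (fun _ => hc1) hΩpos h1 h2
  refine ⟨fun v => if h : v ∈ U then ω ⟨v, h⟩ else 0, ?_⟩
  intro f hf i
  have := hω (⟨f, hf⟩, i)
  simp only [A, mem_filter, mem_univ, true_and, not_forall] at this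
  obtain ⟨a, ha, hai⟩ := this
  push_neg at hai
  refine ⟨a.1, ha, ?_⟩
  show (if h : (a.1 : V) ∈ U then ω ⟨a.1, h⟩ else 0) = i
  rw [dif_pos a.2, Subtype.coe_eta, hai]
end

section
/- Let $H$ be a hypergraph in which every edge contains at least $k$ vertices and meets (i.e., intersects) at most $d$ other edges. Let $t \geq 2$ be an integer with $k \geq 2t$. If $e (1 - 1/t)^{k-1} (1 - 1/t + k/t) ((d+1)(t-1) + 1) \leq 1$ (where $e$ is Euler's number), then $H$ has a $(t,2)$-coloring, i.e., there exists a coloring of the vertices of $H$ with $t$ colors such that every color appears on every edge at least twice. -/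
open Finset

set_option linter.unusedSectionVars false
set_option maxHeartbeats 1000000

namespace HTC
variable {α : Type*} [Fintype α] [DecidableEq α] {t : ℕ}

def iset (i : Fin t) (σ : α → Fin t) : Finset α := Finset.univ.filter (fun v => σ v = i)

lemma mem_iset {i : Fin t} {σ : α → Fin t} {v : α} : v ∈ iset i σ ↔ σ v = i := by
  simp [iset]

lemma card_fiber (i : Fin t) (T : Finset α) :
    (Finset.univ.filter (fun ρ : α → Fin t => iset i ρ = T)).card
      = (t-1) ^ (Fintype.card α - T.card) := by
  classical
  have h1 : (Finset.univ.filter (fun ρ : α → Fin t => iset i ρ = T)).card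
      = Fintype.card {ρ : α → Fin t // iset i ρ = T} := by
    rw [Fintype.card_subtype]
  rw [h1]
  have e : {ρ : α → Fin t // iset i ρ = T} ≃ ({v : α // v ∉ T} → {j : Fin t // ¬ j = i}) :=
  { toFun := fun ρ v => ⟨ρ.1 v.1, by
      intro h
      have hm : v.1 ∈ iset i ρ.1 := mem_iset.2 h
      rw [ρ.2] at hm
      exact v.2 hm⟩
    invFun := fun g => ⟨fun v => if hv : v ∈ T then i else (g ⟨v, hv⟩).1, by
      ext v
      simp only [mem_iset]
      constructor
      · intro hv
        by_contra hvT
        rw [dif_neg hvT] at hv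
        exact (g ⟨v, hvT⟩).2 hv
      · intro hv; rw [dif_pos hv]⟩
    left_inv := fun ρ => by
      apply Subtype.ext
      funext v
      simp only
      split_ifs with hv
      · rw [← ρ.2] at hv
        exact (mem_iset.1 hv).symm
      · rfl
    right_inv := fun g => by
      funext v
      apply Subtype.ext
      simp only [dif_neg v.2] }
  rw [Fintype.card_congr e, Fintype.card_fun]
  have c1 : Fintype.card {j : Fin t // ¬ j = i} = t - 1 := by
    rw [Fintype.card_subtype_compl, Fintype.card_subtype_eq, Fintype.card_fin]
  have c2 : Fintype.card {v : α // v ∉ T} = Fintype.card α - T.card := by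
    rw [Fintype.card_subtype_compl]
    congr 1
    exact Fintype.card_coe T
  rw [c1, c2]


lemma card_comp_iset (i : Fin t) (P : Finset α → Prop) [DecidablePred P] :
    (univ.filter (fun ρ : α → Fin t => P (iset i ρ))).card
      = ∑ T ∈ univ.filter P, (t-1) ^ (Fintype.card α - T.card) := by
  rw [card_eq_sum_card_fiberwise (f := iset i) (t := univ.filter P)
    (fun ρ hρ => by simpa using (mem_filter.1 hρ).2)]
  apply Finset.sum_congr rfl
  intro T hT
  rw [← card_fiber i T]
  congr 1
  rw [filter_filter]
  apply filter_congr
  intro ρ _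
  simp only [mem_filter] at hT
  constructor
  · rintro ⟨_, h⟩; exact h
  · intro h; exact ⟨h ▸ hT.2, h⟩

lemma card_univ_fun : (univ : Finset (α → Fin t)).card = t ^ (Fintype.card α) := by
  rw [card_univ, Fintype.card_fun, Fintype.card_fin]

lemma harris_core (i : Fin t) (A B : Finset α → Prop) [DecidablePred A] [DecidablePred B]
    (hA : ∀ ⦃T T'⦄, T ⊆ T' → A T' → A T)
    (hB : ∀ ⦃T T'⦄, T ⊆ T' → B T → B T') :
    ((univ.filter (fun ρ : α → Fin t => A (iset i ρ) ∧ B (iset i ρ))).card : ℝ)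
        * (t : ℝ) ^ (Fintype.card α)
      ≤ ((univ.filter (fun ρ : α → Fin t => A (iset i ρ))).card : ℝ) *
        ((univ.filter (fun ρ : α → Fin t => B (iset i ρ))).card : ℝ) := by
  classical
  set n := Fintype.card α
  set μ : Finset α → ℝ := fun T => ((t-1 : ℕ) : ℝ) ^ (n - T.card) with hμdef
  set f : Finset α → ℝ := fun T => if A T then 0 else 1 with hfdef
  set g : Finset α → ℝ := fun T => if B T then 1 else 0 with hgdef
  have hμ0 : (0 : Finset α → ℝ) ≤ μ := fun T => by positivity
  have hf0 : (0 : Finset α → ℝ) ≤ f := fun T => by dsimp [f]; split <;> norm_num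
  have hg0 : (0 : Finset α → ℝ) ≤ g := fun T => by dsimp [g]; split <;> norm_num
  have hfm : Monotone f := by
    intro T T' hTT
    dsimp [f]
    by_cases h : A T
    · by_cases h' : A T' <;> simp [h, h']
    · rw [if_neg h, if_neg (fun h' => h (hA hTT h'))]
  have hgm : Monotone g := by
    intro T T' hTT
    dsimp [g]
    by_cases h : B T
    · rw [if_pos h, if_pos (hB hTT h)]
    · by_cases h' : B T' <;> simp [h, h']
  have hsupermod : ∀ a b : Finset α, μ a * μ b ≤ μ (a ⊓ b) * μ (a ⊔ b) := by
    intro a b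
    dsimp [μ]
    rw [← pow_add, ← pow_add]
    apply le_of_eq
    congr 1
    have h1 := Finset.card_inter_add_card_union a b
    have h2 : a.card ≤ n := by simpa using a.card_le_univ
    have h3 : b.card ≤ n := by simpa using b.card_le_univ
    have h4 : (a ∩ b).card ≤ n := by simpa using (a ∩ b).card_le_univ
    have h5 : (a ∪ b).card ≤ n := by simpa using (a ∪ b).card_le_univ
    omega
  have key := fkg f g μ hμ0 hf0 hg0 hfm hgm hsupermod
  -- identify sums
  have hsum : ∀ (P : Finset α → Prop) [DecidablePred P],
      ∑ T : Finset α, (if P T then μ T else 0)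
        = ((univ.filter (fun ρ : α → Fin t => P (iset i ρ))).card : ℝ) := by
    intro P _
    rw [card_comp_iset i P]
    push_cast
    rw [← Finset.sum_filter]
  have hW : ∑ T : Finset α, μ T = (t:ℝ) ^ n := by
    have := hsum (fun _ => True)
    simp only [if_true] at this
    rw [this]
    rw [Finset.filter_true_of_mem (fun _ _ => trivial), card_univ_fun]
    push_cast
    rfl
  set W : ℝ := (t:ℝ) ^ n
  set a : ℝ := ((univ.filter (fun ρ : α → Fin t => A (iset i ρ))).card : ℝ)
  set b : ℝ := ((univ.filter (fun ρ : α → Fin t => B (iset i ρ))).card : ℝ)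
  set x : ℝ := ((univ.filter (fun ρ : α → Fin t => A (iset i ρ) ∧ B (iset i ρ))).card : ℝ)
  have h₁ : ∑ T : Finset α, μ T * f T = W - a := by
    have : ∀ T : Finset α, μ T * f T = μ T - (if A T then μ T else 0) := by
      intro T; dsimp [f]; split <;> ring
    rw [Finset.sum_congr rfl (fun T _ => this T), Finset.sum_sub_distrib, hW, hsum A]
  have h₂ : ∑ T : Finset α, μ T * g T = b := by
    have : ∀ T : Finset α, μ T * g T = (if B T then μ T else 0) := by
      intro T; dsimp [g]; split <;> ring
    rw [Finset.sum_congr rfl (fun T _ => this T), hsum B]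
  have h₃ : ∑ T : Finset α, μ T * (f T * g T) = b - x := by
    have : ∀ T : Finset α, μ T * (f T * g T)
        = (if B T then μ T else 0) - (if A T ∧ B T then μ T else 0) := by
      intro T; dsimp [f, g]
      by_cases hA' : A T <;> by_cases hB' : B T <;> simp [hA', hB']
    rw [Finset.sum_congr rfl (fun T _ => this T), Finset.sum_sub_distrib, hsum B, hsum _]
  rw [h₁, h₂, hW, h₃] at key
  nlinarith [key]


def glue (s : Finset α) (ρ : {v : α // v ∈ s} → Fin t) (τ : {v : α // v ∉ s} → Fin t) :
    α → Fin t :=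
  fun v => if h : v ∈ s then ρ ⟨v, h⟩ else τ ⟨v, h⟩

lemma glue_mem {s : Finset α} {ρ : {v : α // v ∈ s} → Fin t} {τ} {v : α} (h : v ∈ s) :
    glue s ρ τ v = ρ ⟨v, h⟩ := dif_pos h

lemma glue_not_mem {s : Finset α} {ρ : {v : α // v ∈ s} → Fin t} {τ} {v : α} (h : v ∉ s) :
    glue s ρ τ v = τ ⟨v, h⟩ := dif_neg h

def glueEquiv (s : Finset α) :
    (({v : α // v ∈ s} → Fin t) × ({v : α // v ∉ s} → Fin t)) ≃ (α → Fin t) where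
  toFun p := glue s p.1 p.2
  invFun σ := (fun v => σ v.1, fun v => σ v.1)
  left_inv p := by
    obtain ⟨ρ, τ⟩ := p
    refine Prod.ext ?_ ?_ <;> funext v
    · exact glue_mem v.2
    · exact glue_not_mem v.2
  right_inv σ := by
    funext v
    by_cases h : v ∈ s
    · exact glue_mem h
    · exact glue_not_mem h

lemma card_filter_glue (s : Finset α) (D : (α → Fin t) → Prop) [DecidablePred D] :
    (univ.filter D).card
      = ∑ τ : {v : α // v ∉ s} → Fin t,
          (univ.filter (fun ρ : {v : α // v ∈ s} → Fin t => D (glue s ρ τ))).card := by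
  rw [Finset.card_filter,
    ← Equiv.sum_comp (glueEquiv s (t := t)) (fun σ => if D σ then 1 else 0),
    Fintype.sum_prod_type, Finset.sum_comm]
  simp only [Finset.card_filter]
  rfl

lemma card_glue_pow (s : Finset α) :
    ((Finset.univ : Finset ({v : α // v ∉ s} → Fin t))).card = t ^ (Fintype.card α - s.card) := by
  rw [card_univ, Fintype.card_fun, Fintype.card_fin, Fintype.card_subtype_compl]
  congr 2
  rw [← Fintype.card_coe s]

lemma card_subtype_fun (s : Finset α) :
    ((Finset.univ : Finset ({v : α // v ∈ s} → Fin t))).card = t ^ s.card := by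
  rw [card_univ, Fintype.card_fun, Fintype.card_fin]
  congr 1
  rw [← Fintype.card_coe s]

lemma harris_mix (ht : 2 ≤ t) (i : Fin t) (s : Finset α)
    (A C : (α → Fin t) → Prop) [DecidablePred A] [DecidablePred C]
    (hA : ∀ σ σ' : α → Fin t, iset i σ' ∩ s ⊆ iset i σ ∩ s → A σ → A σ')
    (hC : ∀ σ σ' : α → Fin t, (∀ v ∉ s, σ' v = σ v) → iset i σ ∩ s ⊆ iset i σ' ∩ s →
      C σ → C σ') :
    ((univ.filter (fun σ : α → Fin t => A σ ∧ C σ)).card : ℝ) * (t : ℝ) ^ (Fintype.card α)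
      ≤ ((univ.filter A).card : ℝ) * ((univ.filter C).card : ℝ) := by
  classical
  set β := {v : α // v ∈ s}
  set γ := {v : α // v ∉ s}
  obtain ⟨j₀, hj₀⟩ : ∃ j₀ : Fin t, j₀ ≠ i := by
    refine Fintype.exists_ne_of_one_lt_card ?_ i
    simp only [Fintype.card_fin]; omega
  set pat : Finset β → (β → Fin t) := fun T v => if v ∈ T then i else j₀ with hpatdef
  -- i-set of a glued coloring intersected with s, monotone transfer
  have hsub : ∀ (ρ ρ' : β → Fin t) (τ τ' : γ → Fin t), iset i ρ ⊆ iset i ρ' →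
      iset i (glue s ρ τ) ∩ s ⊆ iset i (glue s ρ' τ') ∩ s := by
    intro ρ ρ' τ τ' h v hv
    rw [mem_inter, mem_iset] at hv ⊢
    obtain ⟨hvi, hvs⟩ := hv
    rw [glue_mem hvs] at hvi
    have := h (mem_iset.2 hvi)
    rw [mem_iset] at this
    exact ⟨by rw [glue_mem hvs]; exact this, hvs⟩
  have hpat : ∀ T : Finset β, iset i (pat T) = T := by
    intro T
    ext v
    rw [mem_iset, hpatdef]
    simp only
    split_ifs with h
    · simp [h]
    · simp [h, hj₀]
  set τ₀ : γ → Fin t := fun _ => i with hτ₀def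
  set 𝒜 : Finset β → Prop := fun T => A (glue s (pat T) τ₀) with h𝒜def
  have hAiff : ∀ (ρ : β → Fin t) (τ : γ → Fin t), A (glue s ρ τ) ↔ 𝒜 (iset i ρ) := by
    intro ρ τ
    constructor
    · intro h
      exact hA _ _ (hsub _ _ _ _ (by rw [hpat])) h
    · intro h
      exact hA _ _ (hsub _ _ _ _ (by rw [hpat])) h
  have h𝒜low : ∀ ⦃T T' : Finset β⦄, T ⊆ T' → 𝒜 T' → 𝒜 T := by
    intro T T' hTT h
    exact hA _ _ (hsub _ _ _ _ (by rw [hpat, hpat]; exact hTT)) h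
  -- per-τ application
  have key : ∀ τ : γ → Fin t,
      ((univ.filter (fun ρ : β → Fin t => A (glue s ρ τ) ∧ C (glue s ρ τ))).card : ℝ)
          * (t : ℝ) ^ (s.card)
        ≤ ((univ.filter (fun ρ : β → Fin t => A (glue s ρ τ))).card : ℝ)
          * ((univ.filter (fun ρ : β → Fin t => C (glue s ρ τ))).card : ℝ) := by
    intro τ
    set ℬ : Finset β → Prop := fun T => C (glue s (pat T) τ) with hℬdef
    have hCiff : ∀ ρ : β → Fin t, C (glue s ρ τ) ↔ ℬ (iset i ρ) := by
      intro ρ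
      constructor
      · intro h
        refine hC _ _ (fun v hv => ?_) (hsub _ _ _ _ (by rw [hpat])) h
        rw [glue_not_mem hv, glue_not_mem hv]
      · intro h
        refine hC _ _ (fun v hv => ?_) (hsub _ _ _ _ (by rw [hpat])) h
        rw [glue_not_mem hv, glue_not_mem hv]
    have hℬup : ∀ ⦃T T' : Finset β⦄, T ⊆ T' → ℬ T → ℬ T' := by
      intro T T' hTT h
      refine hC _ _ (fun v hv => ?_) (hsub _ _ _ _ (by rw [hpat, hpat]; exact hTT)) h
      rw [glue_not_mem hv, glue_not_mem hv]
    have hcore := harris_core i 𝒜 ℬ h𝒜low hℬup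
    have e1 : (univ.filter (fun ρ : β → Fin t => A (glue s ρ τ) ∧ C (glue s ρ τ)))
        = (univ.filter (fun ρ : β → Fin t => 𝒜 (iset i ρ) ∧ ℬ (iset i ρ))) := by
      apply filter_congr; intro ρ _
      rw [hAiff ρ τ, hCiff ρ]
    have e2 : (univ.filter (fun ρ : β → Fin t => A (glue s ρ τ)))
        = (univ.filter (fun ρ : β → Fin t => 𝒜 (iset i ρ))) := by
      apply filter_congr; intro ρ _; rw [hAiff ρ τ]
    have e3 : (univ.filter (fun ρ : β → Fin t => C (glue s ρ τ)))
        = (univ.filter (fun ρ : β → Fin t => ℬ (iset i ρ))) := by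
      apply filter_congr; intro ρ _; rw [hCiff ρ]
    rw [e1, e2, e3]
    have hcardβ : Fintype.card β = s.card := by
      rw [← Fintype.card_coe s]
    rw [← hcardβ]
    exact hcore
  -- a is independent of τ
  set a : ℕ := (univ.filter (fun ρ : β → Fin t => A (glue s ρ τ₀))).card with hadef
  have haτ : ∀ τ : γ → Fin t,
      (univ.filter (fun ρ : β → Fin t => A (glue s ρ τ))).card = a := by
    intro τ
    rw [hadef]
    congr 1
    apply filter_congr; intro ρ _
    rw [hAiff ρ τ, hAiff ρ τ₀]
  -- sum everything
  have hAC := card_filter_glue s (fun σ => A σ ∧ C σ)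
  have hAs := card_filter_glue s A
  have hCs := card_filter_glue s C
  have hsumA : (univ.filter A).card = a * t ^ (Fintype.card α - s.card) := by
    rw [hAs]
    rw [Finset.sum_congr rfl (fun τ _ => haτ τ), Finset.sum_const, ← card_glue_pow s]
    rw [smul_eq_mul, mul_comm]
  have main : ((univ.filter (fun σ : α → Fin t => A σ ∧ C σ)).card : ℝ) * (t : ℝ) ^ (s.card)
      ≤ (a : ℝ) * ((univ.filter C).card : ℝ) := by
    rw [hAC, hCs]
    push_cast
    rw [Finset.sum_mul, Finset.mul_sum]
    apply Finset.sum_le_sum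
    intro τ _
    calc ((univ.filter (fun ρ : β → Fin t => A (glue s ρ τ) ∧ C (glue s ρ τ))).card : ℝ)
          * (t : ℝ) ^ (s.card)
        ≤ ((univ.filter (fun ρ : β → Fin t => A (glue s ρ τ))).card : ℝ)
          * ((univ.filter (fun ρ : β → Fin t => C (glue s ρ τ))).card : ℝ) := key τ
      _ = (a : ℝ) * ((univ.filter (fun ρ : β → Fin t => C (glue s ρ τ))).card : ℝ) := by
          rw [haτ τ]
  have hsplit : (t : ℝ) ^ (Fintype.card α) = (t : ℝ) ^ (s.card) * (t : ℝ) ^ (Fintype.card α - s.card) := by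
    rw [← pow_add]
    congr 1
    have : s.card ≤ Fintype.card α := by
      simpa using s.card_le_univ
    omega
  rw [hsplit, hsumA]
  push_cast
  calc ((univ.filter (fun σ : α → Fin t => A σ ∧ C σ)).card : ℝ)
        * ((t:ℝ) ^ s.card * (t:ℝ) ^ (Fintype.card α - s.card))
      = (((univ.filter (fun σ : α → Fin t => A σ ∧ C σ)).card : ℝ) * (t:ℝ) ^ s.card)
        * (t:ℝ) ^ (Fintype.card α - s.card) := by ring
    _ ≤ ((a : ℝ) * ((univ.filter C).card : ℝ)) * (t:ℝ) ^ (Fintype.card α - s.card) := by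
        apply mul_le_mul_of_nonneg_right main (by positivity)
    _ = (a : ℝ) * (t:ℝ) ^ (Fintype.card α - s.card) * ((univ.filter C).card : ℝ) := by ring


lemma card_le_one_count (i : Fin t) :
    (univ.filter (fun ρ : α → Fin t => (iset i ρ).card ≤ 1)).card
      = (t-1)^(Fintype.card α) + (Fintype.card α) * (t-1)^(Fintype.card α - 1) := by
  rw [card_comp_iset i (fun T => T.card ≤ 1)]
  have hsplit : (univ.filter (fun T : Finset α => T.card ≤ 1))
      = (univ.filter (fun T : Finset α => T.card = 0)) ∪
        (univ.filter (fun T : Finset α => T.card = 1)) := by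
    rw [← filter_or]
    apply filter_congr
    intro T _
    simp only [Nat.le_one_iff_eq_zero_or_eq_one]
  rw [hsplit, Finset.sum_union (by
    rw [Finset.disjoint_filter]
    intro T _ h0 h1
    omega)]
  have h0 : (univ.filter (fun T : Finset α => T.card = 0)) = {∅} := by
    ext T; simp [Finset.card_eq_zero]
  have h1sum : ∑ T ∈ univ.filter (fun T : Finset α => T.card = 1),
      (t-1) ^ (Fintype.card α - T.card)
      = (Fintype.card α) * (t-1)^(Fintype.card α - 1) := by
    rw [Finset.sum_congr rfl (fun T hT => by
      rw [(mem_filter.1 hT).2])]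
    rw [Finset.sum_const, smul_eq_mul]
    congr 1
    have : (univ.filter (fun T : Finset α => T.card = 1)) = Finset.univ.powersetCard 1 := by
      ext T
      simp [Finset.mem_powersetCard]
    rw [this, Finset.card_powersetCard, Finset.card_univ, Nat.choose_one_right]
  rw [h0, h1sum]
  simp

noncomputable def realF (t m : ℕ) : ℝ :=
  (1 - 1/(t:ℝ)) ^ (m - 1) * (1 - 1/(t:ℝ) + (m:ℝ)/(t:ℝ))

lemma realF_nonneg (ht : 1 ≤ t) (m : ℕ) : 0 ≤ realF t m := by
  have h1 : (1:ℝ) ≤ (t:ℝ) := by exact_mod_cast ht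
  have : (0:ℝ) ≤ 1 - 1/(t:ℝ) := by
    rw [sub_nonneg, div_le_one (by linarith)]; linarith
  unfold realF
  have : (0:ℝ) ≤ 1 - 1/(t:ℝ) + (m:ℝ)/(t:ℝ) := by positivity
  positivity

lemma count_eq_F (ht : 1 ≤ t) (m : ℕ) (hm : 1 ≤ m) :
    (((t-1)^m + m * (t-1)^(m-1) : ℕ) : ℝ) = realF t m * (t:ℝ)^m := by
  obtain ⟨e, rfl⟩ : ∃ e, m = e + 1 := ⟨m - 1, by omega⟩
  have ht' : (0:ℝ) < (t:ℝ) := by exact_mod_cast Nat.lt_of_lt_of_le Nat.zero_lt_one ht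
  have hcast : ((t - 1 : ℕ) : ℝ) = (t:ℝ) - 1 := by
    push_cast [Nat.cast_sub ht]; ring
  unfold realF
  simp only [Nat.add_sub_cancel]
  push_cast [hcast]
  have h1 : 1 - 1/(t:ℝ) = ((t:ℝ) - 1)/(t:ℝ) := by field_simp
  rw [h1]
  field_simp
  rw [div_pow]
  field_simp
  ring

lemma realF_succ_le (ht : 1 ≤ t) (m : ℕ) (hm : 1 ≤ m) : realF t (m+1) ≤ realF t m := by
  obtain ⟨e, rfl⟩ : ∃ e, m = e + 1 := ⟨m - 1, by omega⟩
  have ht' : (1:ℝ) ≤ (t:ℝ) := by exact_mod_cast ht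
  have htpos : (0:ℝ) < (t:ℝ) := by linarith
  unfold realF
  simp only [Nat.add_sub_cancel]
  set a : ℝ := 1 - 1/(t:ℝ) with hadef
  have ha0 : 0 ≤ a := by
    rw [hadef, sub_nonneg, div_le_one htpos]; linarith
  have ha1 : a ≤ 1 := by
    rw [hadef]; have : 0 ≤ 1/(t:ℝ) := by positivity
    linarith
  have hkey : a * (a + 1/(t:ℝ)) = a := by
    rw [hadef]; field_simp; ring
  have hcast : ((e:ℝ) + 1 + 1) = (e:ℝ) + 2 := by ring
  push_cast
  rw [pow_succ]
  have hu : (0:ℝ) ≤ ((e:ℝ)+1)/(t:ℝ) := by positivity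
  have expand : a + ((e:ℝ)+1+1)/(t:ℝ) = (a + 1/(t:ℝ)) + ((e:ℝ)+1)/(t:ℝ) := by
    field_simp; ring
  calc a ^ e * a * (a + ((e:ℝ)+1+1)/(t:ℝ))
      = a ^ e * (a * (a + 1/(t:ℝ)) + a * (((e:ℝ)+1)/(t:ℝ))) := by rw [expand]; ring
    _ = a ^ e * (a + a * (((e:ℝ)+1)/(t:ℝ))) := by rw [hkey]
    _ ≤ a ^ e * (a + ((e:ℝ)+1)/(t:ℝ)) := by
        apply mul_le_mul_of_nonneg_left _ (by positivity)
        have : a * (((e:ℝ)+1)/(t:ℝ)) ≤ ((e:ℝ)+1)/(t:ℝ) :=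
          mul_le_of_le_one_left hu ha1
        linarith
  
lemma realF_le (ht : 1 ≤ t) {k m : ℕ} (hk : 1 ≤ k) (hm : k ≤ m) : realF t m ≤ realF t k := by
  induction m, hm using Nat.le_induction with
  | base => exact le_refl _
  | succ m hm ih => exact le_trans (realF_succ_le ht m (le_trans hk hm)) ih


lemma inter_edge (i : Fin t) (σ : α → Fin t) (f : Finset α) :
    iset i σ ∩ f = f.filter (fun v => σ v = i) := by
  ext v
  simp [mem_iset, and_comm]

lemma prob_bound (ht : 2 ≤ t) (i : Fin t) (s : Finset α) {k : ℕ} (hk : 1 ≤ k)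
    (hks : k ≤ s.card) :
    ((univ.filter (fun σ : α → Fin t => (s.filter (fun v => σ v = i)).card ≤ 1)).card : ℝ)
      ≤ realF t k * (t:ℝ) ^ (Fintype.card α) := by
  rw [card_filter_glue s]
  have hβ : Fintype.card {v : α // v ∈ s} = s.card := Fintype.card_coe s
  have hinner : ∀ τ : {v : α // v ∉ s} → Fin t,
      (univ.filter (fun ρ : {v : α // v ∈ s} → Fin t =>
        (s.filter (fun v => glue s ρ τ v = i)).card ≤ 1)).card
      = (t-1)^s.card + s.card * (t-1)^(s.card - 1) := by
    intro τ
    have hmap : ∀ ρ : {v : α // v ∈ s} → Fin t,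
        (s.filter (fun v => glue s ρ τ v = i)).card = (iset i ρ).card := by
      intro ρ
      have : s.filter (fun v => glue s ρ τ v = i)
          = (iset i ρ).map (Function.Embedding.subtype _) := by
        ext v
        simp only [mem_filter, Finset.mem_map, Function.Embedding.coe_subtype, mem_iset]
        constructor
        · rintro ⟨hvs, hvi⟩
          exact ⟨⟨v, hvs⟩, by rwa [glue_mem hvs] at hvi, rfl⟩
        · rintro ⟨⟨w, hw⟩, hwi, rfl⟩
          exact ⟨hw, by rw [glue_mem hw]; exact hwi⟩
      rw [this, Finset.card_map]
    have : (univ.filter (fun ρ : {v : α // v ∈ s} → Fin t =>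
        (s.filter (fun v => glue s ρ τ v = i)).card ≤ 1))
        = univ.filter (fun ρ : {v : α // v ∈ s} → Fin t => (iset i ρ).card ≤ 1) := by
      apply filter_congr
      intro ρ _
      rw [hmap ρ]
    rw [this, card_le_one_count i, hβ]
  rw [Finset.sum_congr rfl (fun τ _ => hinner τ), Finset.sum_const, smul_eq_mul,
    card_glue_pow s]
  have hmk : 1 ≤ s.card := le_trans hk hks
  have ht1 : (1:ℕ) ≤ t := by omega
  have hcount := count_eq_F ht1 s.card hmk
  have hmn : s.card ≤ Fintype.card α := by simpa using s.card_le_univ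
  have hsplitpow : (t:ℝ)^(Fintype.card α) = (t:ℝ)^(s.card) * (t:ℝ)^(Fintype.card α - s.card) := by
    rw [← pow_add]; congr 1; omega
  have key : ((t ^ (Fintype.card α - s.card) * ((t-1)^s.card + s.card * (t-1)^(s.card-1)) : ℕ) : ℝ)
      = realF t s.card * (t:ℝ)^(Fintype.card α) := by
    rw [Nat.cast_mul, hcount, hsplitpow]
    push_cast
    ring
  calc ((t ^ (Fintype.card α - s.card) * ((t-1)^s.card + s.card * (t-1)^(s.card-1)) : ℕ) : ℝ)
      = realF t s.card * (t:ℝ)^(Fintype.card α) := key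
    _ ≤ realF t k * (t:ℝ)^(Fintype.card α) := by
        apply mul_le_mul_of_nonneg_right (realF_le ht1 hk hks)
        positivity

lemma numeric_exp {D : ℕ} (hD : 1 ≤ D) :
    (1:ℝ) ≤ Real.exp 1 * (1 - 1/((D:ℝ)+1))^D := by
  have hDpos : (0:ℝ) < (D:ℝ) := by exact_mod_cast hD
  have h1 : (1:ℝ) - 1/((D:ℝ)+1) = (D:ℝ)/((D:ℝ)+1) := by field_simp; ring
  have h2 : (1:ℝ) + 1/(D:ℝ) ≤ Real.exp (1/(D:ℝ)) := by
    have := Real.add_one_le_exp (1/(D:ℝ))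
    linarith
  have h3 : ((1:ℝ) + 1/(D:ℝ))^D ≤ (Real.exp (1/(D:ℝ)))^D := by
    apply pow_le_pow_left₀ (by positivity) h2
  have h4 : (Real.exp (1/(D:ℝ)))^D = Real.exp 1 := by
    rw [← Real.exp_nat_mul]
    congr 1
    field_simp
  have h5 : ((1:ℝ) + 1/(D:ℝ)) = ((D:ℝ)+1)/(D:ℝ) := by field_simp
  have h6 : (((D:ℝ)+1)/(D:ℝ))^D ≤ Real.exp 1 := by
    rw [← h4, ← h5]; exact h3
  have h7 : ((D:ℝ)/((D:ℝ)+1))^D * (((D:ℝ)+1)/(D:ℝ))^D = 1 := by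
    rw [← mul_pow]
    have : (D:ℝ)/((D:ℝ)+1) * (((D:ℝ)+1)/(D:ℝ)) = 1 := by field_simp
    rw [this, one_pow]
  rw [h1]
  calc (1:ℝ) = ((D:ℝ)/((D:ℝ)+1))^D * (((D:ℝ)+1)/(D:ℝ))^D := h7.symm
    _ ≤ ((D:ℝ)/((D:ℝ)+1))^D * Real.exp 1 := by
        apply mul_le_mul_of_nonneg_left h6 (by positivity)
    _ = Real.exp 1 * ((D:ℝ)/((D:ℝ)+1))^D := by ring

def Bad (t : ℕ) {α : Type*} [DecidableEq α] (f : Finset α) (i : Fin t) (σ : α → Fin t) : Prop :=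
  (f.filter (fun v => σ v = i)).card ≤ 1

instance (f : Finset α) (i : Fin t) : DecidablePred (Bad t f i) := fun σ =>
  decidable_of_iff ((f.filter (fun v => σ v = i)).card ≤ 1) Iff.rfl

def Good (t : ℕ) {α : Type*} [Fintype α] [DecidableEq α] (Γ : Finset (Finset α × Fin t)) :
    Finset (α → Fin t) :=
  univ.filter (fun σ => ∀ q ∈ Γ, ¬ Bad t q.1 q.2 σ)

lemma good_split {Γ : Finset (Finset α × Fin t)} {p : Finset α × Fin t} (hp : p ∉ Γ) :
    (Good t Γ).card = (Good t (insert p Γ)).card +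
      (univ.filter (fun σ : α → Fin t =>
        (∀ q ∈ Γ, ¬ Bad t q.1 q.2 σ) ∧ Bad t p.1 p.2 σ)).card := by
  have h1 : Good t (insert p Γ) = (Good t Γ).filter (fun σ => ¬ Bad t p.1 p.2 σ) := by
    unfold Good
    rw [filter_filter]
    apply filter_congr
    intro σ _
    simp only [Finset.forall_mem_insert]
    tauto
  have h2 : (univ.filter (fun σ : α → Fin t =>
      (∀ q ∈ Γ, ¬ Bad t q.1 q.2 σ) ∧ Bad t p.1 p.2 σ))
      = (Good t Γ).filter (fun σ => Bad t p.1 p.2 σ) := by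
    unfold Good
    rw [filter_filter]
  rw [h1, h2, add_comm]
  exact (Finset.card_filter_add_card_filter_not
    (p := fun σ => Bad t p.1 p.2 σ) (s := Good t Γ)).symm

lemma LLL {k d : ℕ} (ht : 2 ≤ t) (hk1 : 1 ≤ k)
    (E' : Finset (Finset α))
    (hcard : ∀ f ∈ E', k ≤ f.card)
    (hmeet : ∀ f ∈ E', (E'.filter (fun g => g ≠ f ∧ (f ∩ g).Nonempty)).card ≤ d)
    (hq : realF t k ≤ (1/(((d+1)*(t-1)+1 : ℕ):ℝ)) *
      (1 - 1/(((d+1)*(t-1)+1 : ℕ):ℝ))^((d+1)*(t-1))) :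
    ∃ σ : α → Fin t, ∀ f ∈ E', ∀ i : Fin t, 2 ≤ (f.filter (fun v => σ v = i)).card := by
  set D : ℕ := (d+1)*(t-1) with hD
  have hD1 : 1 ≤ D := by
    have : 1 ≤ t - 1 := by omega
    calc 1 = 1 * 1 := by ring
      _ ≤ (d+1)*(t-1) := Nat.mul_le_mul (by omega) this
  set M : ℕ := D + 1 with hM
  set x : ℝ := 1/(M:ℝ) with hx
  have hM2 : 2 ≤ M := by omega
  have hx0 : 0 ≤ x := by positivity
  have hx1 : x ≤ 1/2 := by
    rw [hx]
    apply div_le_div_of_nonneg_left (by norm_num) (by norm_num) (by exact_mod_cast hM2)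
  have h1x0 : 0 ≤ 1 - x := by linarith
  have h1x1 : 1 - x ≤ 1 := by linarith
  set I : Finset (Finset α × Fin t) := E' ×ˢ (univ : Finset (Fin t)) with hI
  set n := Fintype.card α
  -- the key induction
  have L1 : ∀ N : ℕ, ∀ Γ ⊆ I, Γ.card = N → ∀ p ∈ I, p ∉ Γ →
      ((univ.filter (fun σ : α → Fin t =>
        (∀ q ∈ Γ, ¬ Bad t q.1 q.2 σ) ∧ Bad t p.1 p.2 σ)).card : ℝ)
        ≤ x * (Good t Γ).card := by
    intro N
    induction N using Nat.strong_induction_on with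
    | _ N ih =>
      intro Γ hΓI hΓN p hpI hpΓ
      obtain ⟨f, i⟩ := p
      have hfE : f ∈ E' := (Finset.mem_product.1 hpI).1
      set nbr : Finset α × Fin t → Prop :=
        fun q => q.2 ≠ i ∧ (q.1 = f ∨ (f ∩ q.1).Nonempty) with hnbr
      set Γ₁ : Finset (Finset α × Fin t) := Γ.filter nbr with hΓ₁
      set Γ₂ : Finset (Finset α × Fin t) := Γ.filter (fun q => ¬ nbr q) with hΓ₂
      have hunion : Γ₂ ∪ Γ₁ = Γ := by
        rw [hΓ₁, hΓ₂, Finset.union_comm]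
        exact Finset.filter_union_filter_not_eq _ Γ
      have hΓ₂Γ : Γ₂ ⊆ Γ := Finset.filter_subset _ _
      have hΓ₁Γ : Γ₁ ⊆ Γ := Finset.filter_subset _ _
      -- Harris step
      have hHarris : ((univ.filter (fun σ : α → Fin t =>
          (∀ q ∈ Γ₂, ¬ Bad t q.1 q.2 σ) ∧ Bad t f i σ)).card : ℝ)
          ≤ realF t k * (Good t Γ₂).card := by
        have hmix := harris_mix ht i f (Bad t f i)
          (fun σ => ∀ q ∈ Γ₂, ¬ Bad t q.1 q.2 σ)
          (by
            intro σ σ' hsub hbad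
            unfold Bad at hbad ⊢
            rw [← inter_edge] at hbad ⊢
            exact le_trans (Finset.card_le_card hsub) hbad)
          (by
            intro σ σ' hout hsub hC q hq2
            obtain ⟨g, j⟩ := q
            have hqΓ : (g, j) ∈ Γ := hΓ₂Γ hq2
            have hqnnbr : ¬ nbr (g, j) := (Finset.mem_filter.1 hq2).2
            have hgood := hC (g, j) hq2
            unfold Bad at hgood ⊢
            intro hbad
            apply hgood
            refine le_trans (Finset.card_le_card ?_) hbad
            intro v hv
            rw [Finset.mem_filter] at hv ⊢
            obtain ⟨hvg, hvj⟩ := hv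
            refine ⟨hvg, ?_⟩
            by_cases hji : j = i
            · subst hji
              by_cases hvf : v ∈ f
              · have : v ∈ iset j σ ∩ f := by
                  rw [Finset.mem_inter, mem_iset]; exact ⟨hvj, hvf⟩
                have := hsub this
                rw [Finset.mem_inter, mem_iset] at this
                exact this.1
              · rw [hout v hvf]; exact hvj
            · have hgf : ¬ (g = f ∨ (f ∩ g).Nonempty) := by
                intro hor
                exact hqnnbr ⟨hji, hor⟩
              push_neg at hgf
              have hvf : v ∉ f := by
                intro hvf
                exact (Finset.nonempty_iff_ne_empty.1 ⟨v, Finset.mem_inter.2 ⟨hvf, hvg⟩⟩) hgf.2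
              rw [hout v hvf]; exact hvj)
        have hpb := prob_bound ht i f hk1 (hcard f hfE)
        have hbadeq : (univ.filter (fun σ : α → Fin t => Bad t f i σ))
            = (univ.filter (fun σ : α → Fin t => (f.filter (fun v => σ v = i)).card ≤ 1)) := by
          apply filter_congr; intro σ _; exact Iff.rfl
        have htn : (0:ℝ) < (t:ℝ)^n := by
          have : (0:ℝ) < (t:ℝ) := by exact_mod_cast (by omega : 0 < t)
          positivity
        have e1 : (univ.filter (fun σ : α → Fin t =>
            (∀ q ∈ Γ₂, ¬ Bad t q.1 q.2 σ) ∧ Bad t f i σ))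
            = (univ.filter (fun σ : α → Fin t =>
              Bad t f i σ ∧ (∀ q ∈ Γ₂, ¬ Bad t q.1 q.2 σ))) := by
          apply filter_congr; intro σ _; tauto
        rw [e1]
        have hGood2 : (Good t Γ₂) = univ.filter (fun σ : α → Fin t =>
            ∀ q ∈ Γ₂, ¬ Bad t q.1 q.2 σ) := rfl
        rw [hGood2]
        have := calc ((univ.filter (fun σ : α → Fin t =>
              Bad t f i σ ∧ (∀ q ∈ Γ₂, ¬ Bad t q.1 q.2 σ))).card : ℝ) * (t:ℝ)^n
            ≤ ((univ.filter (fun σ : α → Fin t => Bad t f i σ)).card : ℝ) *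
              ((univ.filter (fun σ : α → Fin t => ∀ q ∈ Γ₂, ¬ Bad t q.1 q.2 σ)).card : ℝ) :=
              hmix
          _ ≤ (realF t k * (t:ℝ)^n) *
              ((univ.filter (fun σ : α → Fin t => ∀ q ∈ Γ₂, ¬ Bad t q.1 q.2 σ)).card : ℝ) := by
              rw [hbadeq]
              apply mul_le_mul_of_nonneg_right hpb (by positivity)
        nlinarith [this, htn]
      -- peeling step
      have hpeel : ∀ Δ : Finset (Finset α × Fin t), Δ ⊆ Γ₁ →
          (1 - x)^(Δ.card) * ((Good t Γ₂).card : ℝ) ≤ ((Good t (Γ₂ ∪ Δ)).card : ℝ) := by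
        intro Δ
        induction Δ using Finset.induction_on with
        | empty => intro _; simp
        | @insert q Δ hqΔ ihΔ =>
          intro hins
          have hΔΓ₁ : Δ ⊆ Γ₁ := fun r hr => hins (Finset.mem_insert_of_mem hr)
          have hqΓ₁ : q ∈ Γ₁ := hins (Finset.mem_insert_self _ _)
          have hqΓ : q ∈ Γ := hΓ₁Γ hqΓ₁
          have hqI : q ∈ I := hΓI hqΓ
          have hqnot2 : q ∉ Γ₂ := by
            intro h
            exact (Finset.mem_filter.1 h).2 (Finset.mem_filter.1 hqΓ₁).2
          have hqnotU : q ∉ Γ₂ ∪ Δ := by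
            rw [Finset.mem_union]
            rintro (h | h)
            · exact hqnot2 h
            · exact hqΔ h
          have hsubΓ : Γ₂ ∪ Δ ⊆ Γ := by
            apply Finset.union_subset hΓ₂Γ (le_trans hΔΓ₁ hΓ₁Γ)
          have hcardlt : (Γ₂ ∪ Δ).card < N := by
            rw [← hΓN]
            apply Finset.card_lt_card
            rw [Finset.ssubset_iff_of_subset hsubΓ]
            exact ⟨q, hqΓ, hqnotU⟩
          have hIH := ih _ hcardlt (Γ₂ ∪ Δ) (le_trans hsubΓ hΓI) rfl q hqI hqnotU
          have hsplit := good_split (t := t) hqnotU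
          have : ((Good t (insert q (Γ₂ ∪ Δ))).card : ℝ)
              ≥ (1 - x) * ((Good t (Γ₂ ∪ Δ)).card : ℝ) := by
            have hcast : ((Good t (Γ₂ ∪ Δ)).card : ℝ)
                = ((Good t (insert q (Γ₂ ∪ Δ))).card : ℝ) +
                  ((univ.filter (fun σ : α → Fin t =>
                    (∀ r ∈ Γ₂ ∪ Δ, ¬ Bad t r.1 r.2 σ) ∧ Bad t q.1 q.2 σ)).card : ℝ) := by
              exact_mod_cast congrArg (fun z : ℕ => (z:ℝ)) hsplit
            nlinarith [hIH, hcast]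
          have hrw : Γ₂ ∪ insert q Δ = insert q (Γ₂ ∪ Δ) := by
            rw [Finset.union_insert]
          rw [hrw, Finset.card_insert_of_notMem hqΔ, pow_succ]
          calc (1-x)^Δ.card * (1-x) * ((Good t Γ₂).card : ℝ)
              = (1-x) * ((1-x)^Δ.card * ((Good t Γ₂).card : ℝ)) := by ring
            _ ≤ (1-x) * ((Good t (Γ₂ ∪ Δ)).card : ℝ) := by
                apply mul_le_mul_of_nonneg_left (ihΔ hΔΓ₁) h1x0
            _ ≤ ((Good t (insert q (Γ₂ ∪ Δ))).card : ℝ) := this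
      -- size of Γ₁
      have hΓ₁card : Γ₁.card ≤ D := by
        have hsub : Γ₁ ⊆ (insert f (E'.filter (fun g => g ≠ f ∧ (f ∩ g).Nonempty)))
            ×ˢ ((univ : Finset (Fin t)).erase i) := by
          intro q hq
          obtain ⟨g, j⟩ := q
          have hqΓ : (g, j) ∈ Γ := hΓ₁Γ hq
          have hgE : g ∈ E' := (Finset.mem_product.1 (hΓI hqΓ)).1
          have hqn : nbr (g, j) := (Finset.mem_filter.1 hq).2
          rw [Finset.mem_product]
          constructor
          · rcases hqn.2 with h | h
            · rw [h]; exact Finset.mem_insert_self _ _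
            · by_cases hgf : g = f
              · rw [hgf]; exact Finset.mem_insert_self _ _
              · exact Finset.mem_insert_of_mem (Finset.mem_filter.2 ⟨hgE, hgf, h⟩)
          · exact Finset.mem_erase.2 ⟨hqn.1, Finset.mem_univ _⟩
        calc Γ₁.card ≤ _ := Finset.card_le_card hsub
          _ ≤ D := by
            rw [Finset.card_product, Finset.card_erase_of_mem (Finset.mem_univ i),
              Finset.card_univ, Fintype.card_fin]
            apply Nat.mul_le_mul_right
            calc (insert f (E'.filter (fun g => g ≠ f ∧ (f ∩ g).Nonempty))).card
                ≤ (E'.filter (fun g => g ≠ f ∧ (f ∩ g).Nonempty)).card + 1 :=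
                  Finset.card_insert_le _ _
              _ ≤ d + 1 := by
                  have := hmeet f hfE
                  omega
      -- combine
      have hmono : ((univ.filter (fun σ : α → Fin t =>
          (∀ q ∈ Γ, ¬ Bad t q.1 q.2 σ) ∧ Bad t f i σ)).card : ℝ)
          ≤ ((univ.filter (fun σ : α → Fin t =>
            (∀ q ∈ Γ₂, ¬ Bad t q.1 q.2 σ) ∧ Bad t f i σ)).card : ℝ) := by
        have : (univ.filter (fun σ : α → Fin t =>
            (∀ q ∈ Γ, ¬ Bad t q.1 q.2 σ) ∧ Bad t f i σ))
            ⊆ (univ.filter (fun σ : α → Fin t =>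
              (∀ q ∈ Γ₂, ¬ Bad t q.1 q.2 σ) ∧ Bad t f i σ)) := by
          apply Finset.monotone_filter_right
          rintro σ _ ⟨h1, h2⟩
          exact ⟨fun q hq => h1 q (hΓ₂Γ hq), h2⟩
        exact_mod_cast Finset.card_le_card this
      have hqx : realF t k ≤ x * (1-x)^(Γ₁.card) := by
        calc realF t k ≤ x * (1-x)^D := by
              rw [hx]
              exact_mod_cast hq
          _ ≤ x * (1-x)^(Γ₁.card) := by
              apply mul_le_mul_of_nonneg_left _ hx0
              exact pow_le_pow_of_le_one h1x0 h1x1 hΓ₁card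
      have hfinal := hpeel Γ₁ (le_refl _)
      rw [hunion] at hfinal
      calc ((univ.filter (fun σ : α → Fin t =>
            (∀ q ∈ Γ, ¬ Bad t q.1 q.2 σ) ∧ Bad t f i σ)).card : ℝ)
          ≤ ((univ.filter (fun σ : α → Fin t =>
            (∀ q ∈ Γ₂, ¬ Bad t q.1 q.2 σ) ∧ Bad t f i σ)).card : ℝ) := hmono
        _ ≤ realF t k * (Good t Γ₂).card := hHarris
        _ ≤ (x * (1-x)^(Γ₁.card)) * (Good t Γ₂).card := by
            apply mul_le_mul_of_nonneg_right hqx (by positivity)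
        _ = x * ((1-x)^(Γ₁.card) * (Good t Γ₂).card) := by ring
        _ ≤ x * (Good t Γ).card := by
            apply mul_le_mul_of_nonneg_left hfinal hx0
  -- positivity of all-good count
  have L2 : ∀ Γ : Finset (Finset α × Fin t), Γ ⊆ I → (0:ℝ) < (Good t Γ).card := by
    intro Γ
    induction Γ using Finset.induction_on with
    | empty =>
      intro _
      unfold Good
      simp only [Finset.notMem_empty, false_implies, implies_true, Finset.filter_true_of_mem,
        forall_const]
      rw [Finset.card_univ, Fintype.card_fun, Fintype.card_fin]
      have : 0 < t ^ Fintype.card α := Nat.pow_pos (n := Fintype.card α) (by omega)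
      exact_mod_cast this
    | @insert q Γ hqΓ ihΓ =>
      intro hins
      have hΓI : Γ ⊆ I := fun r hr => hins (Finset.mem_insert_of_mem hr)
      have hqI : q ∈ I := hins (Finset.mem_insert_self _ _)
      have hbad := L1 Γ.card Γ hΓI rfl q hqI hqΓ
      have hsplit := good_split (t := t) hqΓ
      have hcast : ((Good t Γ).card : ℝ)
          = ((Good t (insert q Γ)).card : ℝ) +
            ((univ.filter (fun σ : α → Fin t =>
              (∀ r ∈ Γ, ¬ Bad t r.1 r.2 σ) ∧ Bad t q.1 q.2 σ)).card : ℝ) := by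
        exact_mod_cast congrArg (fun z : ℕ => (z:ℝ)) hsplit
      have hpos := ihΓ hΓI
      nlinarith [hbad, hcast, hpos]
  have hfin := L2 I (le_refl _)
  have : (Good t I).Nonempty := by
    rw [← Finset.card_pos]
    exact_mod_cast hfin
  obtain ⟨σ, hσ⟩ := this
  refine ⟨σ, fun f hf i => ?_⟩
  have := (Finset.mem_filter.1 hσ).2 (f, i) (Finset.mem_product.2 ⟨hf, Finset.mem_univ i⟩)
  unfold Bad at this
  exact Nat.succ_le_of_lt (Nat.lt_of_not_le this)

end HTC



/-- **Theorem (Chen et al. 2010).** Let `H` be a hypergraph in which every edge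
contains at least `k` vertices and meets at most `d` other edges, and let `t ≥ 2`
with `k ≥ 2t`. If `e (1-1/t)^(k-1) (1-1/t+k/t) ((d+1)(t-1)+1) ≤ 1` then `H` has a
`(t,2)`-coloring, i.e. there is a coloring of the vertices with `t` colors such
that every color appears on every edge at least twice. -/
theorem hypergraph_t2_coloring {V : Type*} [DecidableEq V]
    (E : Finset (Finset V)) (k d t : ℕ) (ht : 2 ≤ t) (hk : 2 * t ≤ k)
    (hcard : ∀ f ∈ E, k ≤ f.card)
    (hmeet : ∀ f ∈ E, (E.filter (fun g => g ≠ f ∧ (f ∩ g).Nonempty)).card ≤ d)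
    (hineq : Real.exp 1 * (1 - 1 / (t : ℝ)) ^ (k - 1) *
        (1 - 1 / (t : ℝ) + (k : ℝ) / (t : ℝ)) *
        (((d : ℝ) + 1) * ((t : ℝ) - 1) + 1) ≤ 1) :
    ∃ c : V → Fin t, ∀ f ∈ E, ∀ i : Fin t,
      2 ≤ (f.filter (fun v => c v = i)).card := by
  classical
  have ht1 : (1:ℕ) ≤ t := by omega
  have hk1 : 1 ≤ k := by omega
  set V₀ : Finset V := E.biUnion id with hV₀
  have hsubV : ∀ f ∈ E, f ⊆ V₀ := fun f hf v hv => Finset.mem_biUnion.2 ⟨f, hf, hv⟩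
  set φ : Finset V → Finset {x // x ∈ V₀} := fun f => f.subtype (· ∈ V₀) with hφ
  set E' : Finset (Finset {x // x ∈ V₀}) := E.image φ with hE'
  have hφcard : ∀ f ∈ E, (φ f).card = f.card := by
    intro f hf
    have h1 : ((φ f).map (Function.Embedding.subtype _)).card
        = (f.filter (· ∈ V₀)).card := by
      rw [hφ]; dsimp only; rw [Finset.subtype_map]
    rw [Finset.card_map] at h1
    rw [h1, Finset.filter_true_of_mem (fun v hv => hsubV f hf hv)]
  have hφmem : ∀ (f : Finset V) (u : {x // x ∈ V₀}), u ∈ φ f ↔ ↑u ∈ f := by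
    intro f u
    rw [hφ]; dsimp only; exact Finset.mem_subtype
  have hφinj : ∀ f ∈ E, ∀ g ∈ E, φ f = φ g → f = g := by
    intro f hf g hg hfg
    ext v
    constructor
    · intro hv
      have hv0 : v ∈ V₀ := hsubV f hf hv
      have : (⟨v, hv0⟩ : {x // x ∈ V₀}) ∈ φ f := (hφmem f _).2 hv
      rw [hfg] at this
      exact (hφmem g _).1 this
    · intro hv
      have hv0 : v ∈ V₀ := hsubV g hg hv
      have : (⟨v, hv0⟩ : {x // x ∈ V₀}) ∈ φ g := (hφmem g _).2 hv
      rw [← hfg] at this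
      exact (hφmem f _).1 this
  have hint : ∀ f ∈ E, ∀ (g : Finset V), ((φ f) ∩ (φ g)).Nonempty ↔ (f ∩ g).Nonempty := by
    intro f hf g
    constructor
    · rintro ⟨u, hu⟩
      rw [Finset.mem_inter, hφmem, hφmem] at hu
      exact ⟨u, Finset.mem_inter.2 hu⟩
    · rintro ⟨v, hv⟩
      rw [Finset.mem_inter] at hv
      have hv0 : v ∈ V₀ := hsubV f hf hv.1
      exact ⟨⟨v, hv0⟩, Finset.mem_inter.2 ⟨(hφmem f _).2 hv.1, (hφmem g _).2 hv.2⟩⟩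
  have hcard' : ∀ f' ∈ E', k ≤ f'.card := by
    intro f' hf'
    obtain ⟨f, hf, rfl⟩ := Finset.mem_image.1 hf'
    rw [hφcard f hf]
    exact hcard f hf
  have hmeet' : ∀ f' ∈ E', (E'.filter (fun g => g ≠ f' ∧ (f' ∩ g).Nonempty)).card ≤ d := by
    intro f' hf'
    obtain ⟨f, hf, rfl⟩ := Finset.mem_image.1 hf'
    have hsub1 : E'.filter (fun g => g ≠ φ f ∧ (φ f ∩ g).Nonempty)
        ⊆ (E.filter (fun g => g ≠ f ∧ (f ∩ g).Nonempty)).image φ := by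
      intro g' hg'
      rw [Finset.mem_filter] at hg'
      obtain ⟨hg'E, hne, hmeets⟩ := hg'
      obtain ⟨g, hg, rfl⟩ := Finset.mem_image.1 hg'E
      refine Finset.mem_image.2 ⟨g, Finset.mem_filter.2 ⟨hg, ?_, ?_⟩, rfl⟩
      · intro h; exact hne (by rw [h])
      · exact (hint f hf g).1 hmeets
    calc (E'.filter (fun g => g ≠ φ f ∧ (φ f ∩ g).Nonempty)).card
        ≤ ((E.filter (fun g => g ≠ f ∧ (f ∩ g).Nonempty)).image φ).card :=
          Finset.card_le_card hsub1
      _ ≤ (E.filter (fun g => g ≠ f ∧ (f ∩ g).Nonempty)).card := Finset.card_image_le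
      _ ≤ d := hmeet f hf
  -- numeric hypothesis
  set D : ℕ := (d+1)*(t-1) with hD
  set M : ℕ := D + 1 with hM
  have hD1 : 1 ≤ D := by
    have : 1 ≤ t - 1 := by omega
    calc 1 = 1 * 1 := by ring
      _ ≤ (d+1)*(t-1) := Nat.mul_le_mul (by omega) this
  have hMcast : ((M:ℕ):ℝ) = ((d:ℝ)+1)*((t:ℝ)-1)+1 := by
    rw [hM, hD]
    push_cast [Nat.cast_sub ht1]
    ring
  have hq0 : 0 ≤ HTC.realF t k := HTC.realF_nonneg ht1 k
  have hFeq : HTC.realF t k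
      = (1 - 1 / (t : ℝ)) ^ (k - 1) * (1 - 1 / (t : ℝ) + (k : ℝ) / (t : ℝ)) := rfl
  have hMpos : (0:ℝ) < (M:ℝ) := by
    have : 0 < M := by omega
    exact_mod_cast this
  have hexp : (0:ℝ) < Real.exp 1 := Real.exp_pos 1
  have hnum : (1:ℝ) ≤ Real.exp 1 * (1 - 1/(M:ℝ))^D := by
    have := HTC.numeric_exp hD1
    have hcast : ((D:ℝ)+1) = (M:ℝ) := by rw [hM]; push_cast; ring
    rwa [hcast] at this
  have hq : HTC.realF t k ≤ (1/((M:ℕ):ℝ)) * (1 - 1/((M:ℕ):ℝ))^D := by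
    have h1 : Real.exp 1 * HTC.realF t k * (M:ℝ) ≤ 1 := by
      rw [hFeq]
      calc Real.exp 1 * ((1 - 1 / (t : ℝ)) ^ (k - 1) *
            (1 - 1 / (t : ℝ) + (k : ℝ) / (t : ℝ))) * (M:ℝ)
          = Real.exp 1 * (1 - 1 / (t : ℝ)) ^ (k - 1) *
            (1 - 1 / (t : ℝ) + (k : ℝ) / (t : ℝ)) * (((d : ℝ) + 1) * ((t : ℝ) - 1) + 1) := by
            rw [hMcast]; ring
        _ ≤ 1 := hineq
    -- realF ≤ 1/(e M) ≤ (1/M)(1-1/M)^D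
    have h2 : HTC.realF t k * (M:ℝ) ≤ 1/Real.exp 1 := by
      rw [le_div_iff₀ hexp]
      nlinarith [h1]
    have h3 : (1:ℝ)/Real.exp 1 ≤ (1 - 1/(M:ℝ))^D := by
      rw [div_le_iff₀ hexp]
      nlinarith [hnum]
    have h4 : HTC.realF t k * (M:ℝ) ≤ (1 - 1/(M:ℝ))^D := le_trans h2 h3
    rw [div_mul_eq_mul_div, le_div_iff₀ hMpos]
    calc HTC.realF t k * (M:ℝ) ≤ (1 - 1/(M:ℝ))^D := h4
      _ = 1 * (1 - 1/(M:ℝ))^D := by ring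
  rw [hM, hD] at hq
  obtain ⟨σ, hσ⟩ := HTC.LLL (α := {x // x ∈ V₀}) ht hk1 E' hcard' hmeet' hq
  have ht0 : 0 < t := by omega
  set c : V → Fin t := fun v => if h : v ∈ V₀ then σ ⟨v, h⟩ else ⟨0, ht0⟩ with hc
  refine ⟨c, fun f hf i => ?_⟩
  have hgood := hσ (φ f) (Finset.mem_image.2 ⟨f, hf, rfl⟩) i
  have hmapeq : ((φ f).filter (fun u => σ u = i)).map (Function.Embedding.subtype _)
      = f.filter (fun v => c v = i) := by
    ext v
    simp only [Finset.mem_map, Finset.mem_filter, Function.Embedding.coe_subtype]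
    constructor
    · rintro ⟨⟨w, hw⟩, ⟨hwf, hwi⟩, rfl⟩
      rw [hφmem] at hwf
      refine ⟨hwf, ?_⟩
      show c w = i
      rw [hc]
      dsimp only
      rw [dif_pos hw]
      exact hwi
    · rintro ⟨hvf, hci⟩
      have hv0 : v ∈ V₀ := hsubV f hf hvf
      refine ⟨⟨v, hv0⟩, ⟨(hφmem f _).2 hvf, ?_⟩, rfl⟩
      have : c v = σ ⟨v, hv0⟩ := by rw [hc]; dsimp only; rw [dif_pos hv0]
      rw [← this]
      exact hci
  calc 2 ≤ ((φ f).filter (fun u => σ u = i)).card := hgood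
    _ = (((φ f).filter (fun u => σ u = i)).map (Function.Embedding.subtype _)).card :=
        (Finset.card_map _).symm
    _ = (f.filter (fun v => c v = i)).card := by rw [hmapeq]
end

section
/- (Symmetric lopsided Lovász Local Lemma.) Let $A_1, \ldots, A_n$ be events in a finite probability space $\Omega$ equipped with a probability measure $P$, and let $G$ be a graph on vertex set $\{1, \ldots, n\}$ that is a lopsidependency graph for $A_1, \ldots, A_n$: for every $i$ and every subset $S \subseteq \{1, \ldots, n\} \setminus (\{i\} \cup N_G(i))$ with $P(\bigcap_{j \in S} \overline{A_j}) > 0$, one has $P(A_i \mid \bigcap_{j \in S} \overline{A_j}) \leq P(A_i)$. Suppose each event $A_i$ has probability at most $p$ and each vertex of $G$ has degree at most $\Delta$. If $e \cdot p \cdot (\Delta + 1) \leq 1$ (where $e$ is Euler's number), then $P(\bigcap_{i=1}^{n} \overline{A_i}) > 0$. -/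
open MeasureTheory ProbabilityTheory

/-- **Symmetric lopsided Lovász Local Lemma.** Let `A 1, …, A n` be events in a
finite probability space `(Ω, P)` and let `G` be a lopsidependency graph for them:
for every `i` and every set `S` of indices that are neither `i` nor adjacent to `i`
in `G`, with `P(⋂_{j ∈ S} Aⱼᶜ) > 0`, one has `P(Aᵢ | ⋂_{j ∈ S} Aⱼᶜ) ≤ P(Aᵢ)`.
If each `P(Aᵢ) ≤ p`, each vertex of `G` has degree at most `Δ`, and
`e·p·(Δ+1) ≤ 1`, then `P(⋂ᵢ Aᵢᶜ) > 0`. -/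
theorem lopsided_LLL_symmetric {Ω : Type*} [Fintype Ω] [MeasurableSpace Ω]
    (P : Measure Ω) [IsProbabilityMeasure P]
    (n : ℕ) (A : Fin n → Set Ω) (hA : ∀ i, MeasurableSet (A i))
    (G : SimpleGraph (Fin n)) [DecidableRel G.Adj]
    (hlops : ∀ i : Fin n, ∀ S : Finset (Fin n),
      (∀ j ∈ S, j ≠ i ∧ ¬ G.Adj i j) →
      0 < P (⋂ j ∈ S, (A j)ᶜ) →
      ProbabilityTheory.cond P (⋂ j ∈ S, (A j)ᶜ) (A i) ≤ P (A i))
    (p : ℝ) (Δ : ℕ)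
    (hp : ∀ i, (P (A i)).toReal ≤ p)
    (hdeg : ∀ i, G.degree i ≤ Δ)
    (hineq : Real.exp 1 * p * ((Δ : ℝ) + 1) ≤ 1) :
    0 < P (⋂ i, (A i)ᶜ) := by
  classical
  set x : ℝ := if Δ = 0 then 1/2 else 1/((Δ:ℝ)+1) with hxdef
  have hΔpos : (0:ℝ) < (Δ:ℝ) + 1 := by positivity
  have hepos : (0:ℝ) < Real.exp 1 := Real.exp_pos 1
  have he1 : (2:ℝ) < Real.exp 1 := by
    have := Real.exp_one_gt_d9; linarith
  have hx0 : 0 < x := by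
    rw [hxdef]; split <;> positivity
  have hx1 : x < 1 := by
    rw [hxdef]; split
    · norm_num
    · rename_i h
      rw [div_lt_one hΔpos]
      have : (1:ℝ) ≤ (Δ:ℝ) := by exact_mod_cast Nat.one_le_iff_ne_zero.mpr h
      linarith
  -- the crucial numeric inequality
  have hkey_p : 0 ≤ p → p ≤ x * (1-x)^Δ := by
    intro hp0
    by_cases hΔ : Δ = 0
    · subst hΔ
      simp only [hxdef, if_pos rfl]
      simp only [Nat.cast_zero, zero_add, mul_one] at hineq ⊢
      norm_num
      nlinarith
    · rw [hxdef, if_neg hΔ]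
      have hΔ1 : (1:ℝ) ≤ (Δ:ℝ) := by exact_mod_cast Nat.one_le_iff_ne_zero.mpr hΔ
      have hΔr : (0:ℝ) < (Δ:ℝ) := by linarith
      have hb : (((Δ:ℝ)+1)/(Δ:ℝ))^Δ ≤ Real.exp 1 := by
        have h1 : (1:ℝ)/(Δ:ℝ) + 1 ≤ Real.exp (1/(Δ:ℝ)) := Real.add_one_le_exp _
        have h2 : (((Δ:ℝ)+1)/(Δ:ℝ)) = 1/(Δ:ℝ) + 1 := by field_simp; ring
        calc (((Δ:ℝ)+1)/(Δ:ℝ))^Δ ≤ (Real.exp (1/(Δ:ℝ)))^Δ := by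
              apply pow_le_pow_left₀ (by positivity)
              rw [h2]; exact h1
          _ = Real.exp ((Δ:ℝ) * (1/(Δ:ℝ))) := by rw [Real.exp_nat_mul]
          _ = Real.exp 1 := by rw [mul_one_div, div_self (ne_of_gt hΔr)]
      have h1x : (1 : ℝ) - 1/((Δ:ℝ)+1) = (Δ:ℝ)/((Δ:ℝ)+1) := by field_simp; ring
      rw [h1x]
      have hinv : (Real.exp 1)⁻¹ ≤ ((Δ:ℝ)/((Δ:ℝ)+1))^Δ := by
        have hpow : ((Δ:ℝ)/((Δ:ℝ)+1))^Δ = ((((Δ:ℝ)+1)/(Δ:ℝ))^Δ)⁻¹ := by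
          rw [← inv_pow]
          congr 1
          rw [inv_div]
        rw [hpow]
        exact inv_anti₀ (by positivity) hb
      have hple : p ≤ 1/(Real.exp 1 * ((Δ:ℝ)+1)) := by
        rw [le_div_iff₀ (by positivity)]
        nlinarith
      calc p ≤ 1/(Real.exp 1 * ((Δ:ℝ)+1)) := hple
        _ = (1/((Δ:ℝ)+1)) * (Real.exp 1)⁻¹ := by field_simp
        _ ≤ (1/((Δ:ℝ)+1)) * ((Δ:ℝ)/((Δ:ℝ)+1))^Δ := by
            apply mul_le_mul_of_nonneg_left hinv (by positivity)
  have hAc : ∀ S : Finset (Fin n), MeasurableSet (⋂ j ∈ S, (A j)ᶜ) := fun S =>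
    Finset.measurableSet_biInter S (fun j _ => (hA j).compl)
  have hfin : ∀ s : Set Ω, P s ≠ ⊤ := fun s => measure_ne_top P s
  -- real-valued version of the lopsidependency hypothesis
  have hl : ∀ (i : Fin n) (S : Finset (Fin n)), (∀ j ∈ S, j ≠ i ∧ ¬ G.Adj i j) →
      0 < (P (⋂ j ∈ S, (A j)ᶜ)).toReal →
      (P (A i ∩ ⋂ j ∈ S, (A j)ᶜ)).toReal ≤ (P (A i)).toReal * (P (⋂ j ∈ S, (A j)ᶜ)).toReal := by
    intro i S hS hpos
    set t := ⋂ j ∈ S, (A j)ᶜ with ht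
    have htm := hAc S
    have htpos : 0 < P t := by
      by_contra h
      push_neg at h
      have : P t = 0 := le_antisymm h zero_le
      rw [this] at hpos; simp at hpos
    have hc := hlops i S hS htpos
    rw [cond_apply htm] at hc
    have h2 : P (t ∩ A i) ≤ P (A i) * P t := by
      calc P (t ∩ A i) = P t * ((P t)⁻¹ * P (t ∩ A i)) := by
            rw [← mul_assoc, ENNReal.mul_inv_cancel (ne_of_gt htpos) (hfin t), one_mul]
        _ ≤ P t * P (A i) := mul_le_mul_right hc _
        _ = P (A i) * P t := mul_comm _ _
    have h3 : (P (t ∩ A i)).toReal ≤ (P (A i) * P t).toReal :=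
      ENNReal.toReal_mono (ENNReal.mul_ne_top (hfin _) (hfin _)) h2
    rw [ENNReal.toReal_mul] at h3
    rw [Set.inter_comm]
    exact h3
  -- splitting off a complement
  have hcsplit : ∀ (k : Fin n) (t : Set Ω), MeasurableSet t →
      (P ((A k)ᶜ ∩ t)).toReal = (P t).toReal - (P (A k ∩ t)).toReal := by
    intro k t htm
    have := measure_inter_add_diff t (hA k) (μ := P)
    have h2 : (P (t ∩ A k)).toReal + (P (t \ A k)).toReal = (P t).toReal := by
      rw [← ENNReal.toReal_add (hfin _) (hfin _), this]
    have e1 : t \ A k = (A k)ᶜ ∩ t := by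
      rw [Set.diff_eq, Set.inter_comm]
    have e2 : t ∩ A k = A k ∩ t := Set.inter_comm _ _
    rw [e1, e2] at h2
    linarith
  -- the main induction
  have key : ∀ S : Finset (Fin n),
      0 < (P (⋂ j ∈ S, (A j)ᶜ)).toReal ∧
      ∀ i ∉ S, (P (A i ∩ ⋂ j ∈ S, (A j)ᶜ)).toReal ≤ x * (P (⋂ j ∈ S, (A j)ᶜ)).toReal := by
    intro S
    induction S using Finset.strongInduction with
    | _ S ih =>
    have hpos : 0 < (P (⋂ j ∈ S, (A j)ᶜ)).toReal := by
      rcases S.eq_empty_or_nonempty with rfl | ⟨j, hj⟩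
      · simp
      · have hST : S = insert j (S.erase j) := (Finset.insert_erase hj).symm
        have ihT := ih (S.erase j) (Finset.erase_ssubset hj)
        have hbound := ihT.2 j (Finset.notMem_erase j S)
        rw [hST, Finset.set_biInter_insert, hcsplit j _ (hAc _)]
        nlinarith [ihT.1, hbound, hx1]
    refine ⟨hpos, ?_⟩
    intro i hi
    set S₁ := S.filter (fun j => G.Adj i j) with hS₁def
    set S₂ := S.filter (fun j => ¬ G.Adj i j) with hS₂def
    have hS12 : S₂ ∪ S₁ = S := by
      rw [Finset.union_comm]
      exact Finset.filter_union_filter_not_eq _ S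
    have hS₂sub : S₂ ⊆ S := Finset.filter_subset _ _
    have hS₁sub : S₁ ⊆ S := Finset.filter_subset _ _
    have hsubset : (⋂ j ∈ S, (A j)ᶜ) ⊆ ⋂ j ∈ S₂, (A j)ᶜ := by
      intro ω hω
      simp only [Set.mem_iInter] at *
      exact fun j hj => hω j (hS₂sub hj)
    have hmono : (P (⋂ j ∈ S, (A j)ᶜ)).toReal ≤ (P (⋂ j ∈ S₂, (A j)ᶜ)).toReal :=
      ENNReal.toReal_mono (hfin _) (measure_mono hsubset)
    have hpos₂ : 0 < (P (⋂ j ∈ S₂, (A j)ᶜ)).toReal := lt_of_lt_of_le hpos hmono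
    -- chain bound
    have chain : ∀ T, T ⊆ S₁ →
        (1-x)^T.card * (P (⋂ j ∈ S₂, (A j)ᶜ)).toReal ≤ (P (⋂ j ∈ S₂ ∪ T, (A j)ᶜ)).toReal := by
      intro T
      induction T using Finset.induction_on with
      | empty => intro _; simp
      | @insert k T hk ihT =>
        intro hsub
        have hkS₁ : k ∈ S₁ := hsub (Finset.mem_insert_self k T)
        have hTsub : T ⊆ S₁ := fun a ha => hsub (Finset.mem_insert_of_mem ha)
        have hkAdj : G.Adj i k := (Finset.mem_filter.mp hkS₁).2
        have hkS₂ : k ∉ S₂ := by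
          intro hmem
          exact (Finset.mem_filter.mp hmem).2 hkAdj
        have hkU : k ∉ S₂ ∪ T := by
          simp only [Finset.mem_union]
          rintro (h | h)
          · exact hkS₂ h
          · exact hk h
        have hUss : S₂ ∪ T ⊂ S := by
          refine Finset.ssubset_iff_of_subset ?_ |>.mpr ⟨k, hS₁sub hkS₁, hkU⟩
          exact Finset.union_subset hS₂sub (hTsub.trans hS₁sub)
        have ihU := ih (S₂ ∪ T) hUss
        have hb := ihU.2 k hkU
        have e1 : S₂ ∪ insert k T = insert k (S₂ ∪ T) := by rw [Finset.union_insert]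
        rw [e1, Finset.set_biInter_insert, hcsplit k _ (hAc _),
          Finset.card_insert_of_notMem hk, pow_succ]
        have hchT := ihT hTsub
        nlinarith [ihU.1, hx0, hx1,
          pow_nonneg (by linarith : (0:ℝ) ≤ 1 - x) T.card,
          ENNReal.toReal_nonneg (a := P (⋂ j ∈ S₂, (A j)ᶜ))]
    have hchainS : (1-x)^S₁.card * (P (⋂ j ∈ S₂, (A j)ᶜ)).toReal
        ≤ (P (⋂ j ∈ S, (A j)ᶜ)).toReal := by
      have := chain S₁ (le_refl _)
      rwa [hS12] at this
    -- card of S₁ at most Δ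
    have hcard : S₁.card ≤ Δ := by
      have hsub1 : S₁ ⊆ G.neighborFinset i := by
        intro j hj
        rw [SimpleGraph.mem_neighborFinset]
        exact (Finset.mem_filter.mp hj).2
      calc S₁.card ≤ (G.neighborFinset i).card := Finset.card_le_card hsub1
        _ = G.degree i := rfl
        _ ≤ Δ := hdeg i
    have hpowle : (1-x)^Δ ≤ (1-x)^S₁.card :=
      pow_le_pow_of_le_one (by linarith) (by linarith) hcard
    have hchainΔ : (1-x)^Δ * (P (⋂ j ∈ S₂, (A j)ᶜ)).toReal
        ≤ (P (⋂ j ∈ S, (A j)ᶜ)).toReal := by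
      calc (1-x)^Δ * (P (⋂ j ∈ S₂, (A j)ᶜ)).toReal
          ≤ (1-x)^S₁.card * (P (⋂ j ∈ S₂, (A j)ᶜ)).toReal :=
            mul_le_mul_of_nonneg_right hpowle (le_of_lt hpos₂)
        _ ≤ _ := hchainS
    -- numerator bound
    have hS₂cond : ∀ j ∈ S₂, j ≠ i ∧ ¬ G.Adj i j := by
      intro j hj
      refine ⟨?_, (Finset.mem_filter.mp hj).2⟩
      intro hji
      exact hi (hji ▸ hS₂sub hj)
    have hnum1 : (P (A i ∩ ⋂ j ∈ S, (A j)ᶜ)).toReal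
        ≤ (P (A i ∩ ⋂ j ∈ S₂, (A j)ᶜ)).toReal :=
      ENNReal.toReal_mono (hfin _) (measure_mono (Set.inter_subset_inter_right _ hsubset))
    have hnum2 := hl i S₂ hS₂cond hpos₂
    have hp0 : 0 ≤ p := le_trans ENNReal.toReal_nonneg (hp i)
    have hpx := hkey_p hp0
    have hnum3 : (P (A i)).toReal * (P (⋂ j ∈ S₂, (A j)ᶜ)).toReal
        ≤ p * (P (⋂ j ∈ S₂, (A j)ᶜ)).toReal :=
      mul_le_mul_of_nonneg_right (hp i) (le_of_lt hpos₂)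
    have hfin1 : p * (P (⋂ j ∈ S₂, (A j)ᶜ)).toReal ≤ x * (P (⋂ j ∈ S, (A j)ᶜ)).toReal := by
      calc p * (P (⋂ j ∈ S₂, (A j)ᶜ)).toReal
          ≤ (x * (1-x)^Δ) * (P (⋂ j ∈ S₂, (A j)ᶜ)).toReal :=
            mul_le_mul_of_nonneg_right hpx (le_of_lt hpos₂)
        _ = x * ((1-x)^Δ * (P (⋂ j ∈ S₂, (A j)ᶜ)).toReal) := by ring
        _ ≤ x * (P (⋂ j ∈ S, (A j)ᶜ)).toReal :=
            mul_le_mul_of_nonneg_left hchainΔ (le_of_lt hx0)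
    linarith
  have hfinal := (key Finset.univ).1
  have e : (⋂ j ∈ (Finset.univ : Finset (Fin n)), (A j)ᶜ) = ⋂ i, (A i)ᶜ := by simp
  rw [e] at hfinal
  have hne : P (⋂ i, (A i)ᶜ) ≠ 0 := by
    intro h
    rw [h] at hfinal
    simp at hfinal
  exact lt_of_le_of_ne zero_le (Ne.symm hne)
end

section
/- (McDiarmid's lopsidependency lemma.) Let $n, t$ be positive integers, let $V = \{1, \ldots, n\}$, and let $P$ be a product probability measure on the space $\Omega$ of functions $\omega : V \to \{1, \ldots, t\}$ (the coordinates $\omega_v$ are independent). For each color $j \in \{1, \ldots, t\}$, let $\mathscr{C}^{(j)}$ be a collection of subsets of $V$, and for each $f \in \mathscr{C}^{(j)}$ let $D_f^{(j)}$ be a downset (hereditary collection, i.e., closed under taking subsets) of subsets of $f$, and define the event $A_f^{(j)} = \{\omega \in \Omega : \{v \in f : \omega_v = j\} \in D_f^{(j)}\}$. Let $G$ be the graph whose vertices are the pairs $(f, j)$ with $f \in \mathscr{C}^{(j)}$, where $(f, j)$ and $(f', j')$ are adjacent if and only if $j \neq j'$ and $f \cap f' \neq \emptyset$. Then $G$ is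 a lopsidependency graph for the events $A_f^{(j)}$: for every pair $(f, j)$ and every set $S$ of pairs $(f', j')$, each of which is neither equal to $(f, j)$ nor adjacent to $(f, j)$ in $G$, such that $P(\bigcap_{(f', j') \in S} \overline{A_{f'}^{(j')}}) > 0$, one has $P(A_f^{(j)} \mid \bigcap_{(f', j') \in S} \overline{A_{f'}^{(j')}}) \leq P(A_f^{(j)})$. -/
open MeasureTheory ProbabilityTheory

open Finset

/-- **McDiarmid's lopsidependency lemma.** Let `Ω = (Fin n → Fin t)` with a product
probability measure `Measure.pi μ` (coordinates independent). For each color `j`,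
let `C j` be a collection of subsets of `V = Fin n`, and for each `f ∈ C j` let
`D j f` be a downset of subsets of `f`; define the event
`A_f^j = {ω : {v ∈ f : ω v = j} ∈ D j f}`. Then the graph in which `(f, j)` and
`(f', j')` are adjacent iff `j ≠ j'` and `f ∩ f' ≠ ∅` is a lopsidependency graph
for these events: for every `(f, j)` with `f ∈ C j` and every set `S` of pairs,
each of which is neither `(f, j)` nor adjacent to `(f, j)`, with
`P(⋂_{(f',j') ∈ S} (A_{f'}^{j'})ᶜ) > 0`, one has
`P(A_f^j | ⋂_{(f',j') ∈ S} (A_{f'}^{j'})ᶜ) ≤ P(A_f^j)`. -/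
theorem mcdiarmid_lopsidependency (n t : ℕ)
    (μ : Fin n → Measure (Fin t)) [∀ v, IsProbabilityMeasure (μ v)]
    (C : Fin t → Finset (Finset (Fin n)))
    (D : Fin t → Finset (Fin n) → Finset (Finset (Fin n)))
    (hDsub : ∀ j f, f ∈ C j → ∀ a ∈ D j f, a ⊆ f)
    (hDdown : ∀ j f, f ∈ C j → ∀ a ∈ D j f, ∀ b ⊆ a, b ∈ D j f)
    (f : Finset (Fin n)) (j : Fin t) (hf : f ∈ C j)
    (S : Finset (Finset (Fin n) × Fin t))
    (hS : ∀ q ∈ S, q.1 ∈ C q.2 ∧ q ≠ (f, j) ∧ ¬(q.2 ≠ j ∧ (f ∩ q.1).Nonempty))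
    (hpos : 0 < Measure.pi μ
      (⋂ q ∈ S, {ω : Fin n → Fin t | q.1.filter (fun v => ω v = q.2) ∈ D q.2 q.1}ᶜ)) :
    ProbabilityTheory.cond (Measure.pi μ)
        (⋂ q ∈ S, {ω : Fin n → Fin t | q.1.filter (fun v => ω v = q.2) ∈ D q.2 q.1}ᶜ)
        {ω : Fin n → Fin t | f.filter (fun v => ω v = j) ∈ D j f}
      ≤ Measure.pi μ {ω : Fin n → Fin t | f.filter (fun v => ω v = j) ∈ D j f} := by
  classical
  set Ω := (Fin n → Fin t)
  set B : Set Ω := ⋂ q ∈ S, {ω : Ω | q.1.filter (fun v => ω v = q.2) ∈ D q.2 q.1}ᶜ with hBdef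
  set A : Set Ω := {ω : Ω | f.filter (fun v => ω v = j) ∈ D j f} with hAdef
  have hmemB : ∀ ω : Ω, ω ∈ B ↔ ∀ q ∈ S, q.1.filter (fun v => ω v = q.2) ∉ D q.2 q.1 := by
    intro ω; simp [hBdef]
  have hmemA : ∀ ω : Ω, ω ∈ A ↔ f.filter (fun v => ω v = j) ∈ D j f := by
    intro ω; simp [hAdef]
  -- weights
  set W : Ω → ℝ := fun ω => ∏ v, (μ v {ω v}).toReal with hWdef
  have hW0 : ∀ ω, 0 ≤ W ω := fun ω => Finset.prod_nonneg fun _ _ => ENNReal.toReal_nonneg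
  set P : Set Ω → ℝ := fun E => ∑ ω ∈ Finset.univ.filter (· ∈ E), W ω with hPdef
  -- measure as sum
  have hPE : ∀ E : Set Ω, (Measure.pi μ E).toReal = P E := by
    intro E
    have h : Measure.pi μ E = ∑ ω ∈ Finset.univ.filter (· ∈ E), Measure.pi μ {ω} := by
      have hE : E = ⋃ ω ∈ (Finset.univ.filter (· ∈ E) : Finset Ω), ({ω} : Set Ω) := by
        ext ω; simp
      conv_lhs => rw [hE]
      rw [measure_biUnion_finset ?_ (fun ω _ => (Set.to_countable _).measurableSet)]
      intro a _ b hb hab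
      simp [Set.disjoint_singleton, hab]
    rw [h, ENNReal.toReal_sum (fun ω _ => measure_ne_top _ _)]
    refine Finset.sum_congr rfl fun ω _ => ?_
    rw [← Set.univ_pi_singleton, Measure.pi_pi, ENNReal.toReal_prod]
  -- fiber map
  set F : Ω → Finset (Fin n) := fun ω => f.filter (fun v => ω v = j) with hFdef
  have hFmem : ∀ (ω : Ω) (v : Fin n), v ∈ F ω ↔ v ∈ f ∧ ω v = j := by
    intro ω v; simp [hFdef]
  have hFsub : ∀ ω : Ω, F ω ⊆ f := fun ω => Finset.filter_subset _ _
  set m : Finset (Fin n) → ℝ := fun s => ∑ ω ∈ Finset.univ.filter (fun ω => F ω = s), W ω with hmdef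
  set g : Finset (Fin n) → ℝ :=
    fun s => ∑ ω ∈ (Finset.univ.filter (· ∈ B)).filter (fun ω => F ω = s), W ω with hgdef
  have hm0 : ∀ s, 0 ≤ m s := fun s => Finset.sum_nonneg fun ω _ => hW0 ω
  have hg0 : ∀ s, 0 ≤ g s := fun s => Finset.sum_nonneg fun ω _ => hW0 ω
  -- the key coupling inequality
  have key : ∀ s, s ⊆ f → ∀ s', s' ⊆ f → g s * m s' ≤ m (s ∩ s') * g (s ∪ s') := by
    intro s hs s' hs'
    rw [hgdef, hmdef, Finset.sum_mul_sum, Finset.sum_mul_sum]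
    rw [← Finset.sum_product', ← Finset.sum_product']
    set σ : Ω × Ω → Ω × Ω := fun p =>
      (fun v => if v ∈ f \ s then p.1 v else p.2 v,
       fun v => if v ∈ f \ s then p.2 v else p.1 v) with hσdef
    have hσinv : ∀ p, σ (σ p) = p := by
      intro p
      ext v <;> · simp only [hσdef]; by_cases h : v ∈ f \ s <;> simp [h]
    have hwt : ∀ p : Ω × Ω, W p.1 * W p.2 = W (σ p).1 * W (σ p).2 := by
      intro p
      simp only [hWdef, ← Finset.prod_mul_distrib]
      refine Finset.prod_congr rfl fun v _ => ?_
      by_cases h : v ∈ f \ s <;> simp [hσdef, h, mul_comm, -Finset.mem_sdiff]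
    have hmaps : ∀ p ∈ ((Finset.univ.filter (· ∈ B)).filter (fun ω => F ω = s)) ×ˢ
        (Finset.univ.filter (fun ω => F ω = s')),
        σ p ∈ (Finset.univ.filter (fun ω => F ω = s ∩ s')) ×ˢ
          ((Finset.univ.filter (· ∈ B)).filter (fun ω => F ω = s ∪ s')) := by
      rintro ⟨ω, ω'⟩ hp
      simp only [Finset.mem_product, Finset.mem_filter, Finset.mem_univ, true_and] at hp
      obtain ⟨⟨hωB, hωF⟩, hω'F⟩ := hp
      set η : Ω := fun v => if v ∈ f \ s then ω v else ω' v with hηdef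
      set ζ : Ω := fun v => if v ∈ f \ s then ω' v else ω v with hζdef
      have hσp : σ (ω, ω') = (η, ζ) := rfl
      rw [hσp]
      have hωj : ∀ v ∈ f, (ω v = j ↔ v ∈ s) := by
        intro v hv
        rw [← hωF, hFmem]; tauto
      have hω'j : ∀ v ∈ f, (ω' v = j ↔ v ∈ s') := by
        intro v hv
        rw [← hω'F, hFmem]; tauto
      have hζω : ∀ v, v ∉ f \ s → ζ v = ω v := by
        intro v hv; rw [hζdef]; exact if_neg hv
      have hζω' : ∀ v, v ∈ f \ s → ζ v = ω' v := by
        intro v hv; rw [hζdef]; exact if_pos hv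
      have hηω : ∀ v, v ∈ f \ s → η v = ω v := by
        intro v hv; rw [hηdef]; exact if_pos hv
      have hηω' : ∀ v, v ∉ f \ s → η v = ω' v := by
        intro v hv; rw [hηdef]; exact if_neg hv
      simp only [Finset.mem_product, Finset.mem_filter, Finset.mem_univ, true_and]
      have hmemfs : ∀ v, v ∈ s → v ∉ f \ s := by
        intro v hv; simp [Finset.mem_sdiff, hv]
      refine ⟨?_, ?_, ?_⟩
      · -- F η = s ∩ s'
        ext v
        rw [hFmem, Finset.mem_inter]
        constructor
        · rintro ⟨hvf, hv⟩
          by_cases hd : v ∈ f \ s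
          · rw [hηω v hd] at hv
            exact absurd ((hωj v hvf).mp hv) (Finset.mem_sdiff.mp hd).2
          · rw [hηω' v hd] at hv
            have hvs : v ∈ s := by
              by_contra hvs; exact hd (Finset.mem_sdiff.mpr ⟨hvf, hvs⟩)
            exact ⟨hvs, (hω'j v hvf).mp hv⟩
        · rintro ⟨hvs, hvs'⟩
          have hvf : v ∈ f := hs hvs
          refine ⟨hvf, ?_⟩
          rw [hηω' v (hmemfs v hvs)]
          exact (hω'j v hvf).mpr hvs'
      · -- ζ ∈ B
        rw [hmemB]
        intro q hq
        rw [hmemB] at hωB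
        have hq' := hS q hq
        push_neg at hq'
        by_cases hqj : q.2 = j
        · have hsub : q.1.filter (fun v => ω v = q.2) ⊆ q.1.filter (fun v => ζ v = q.2) := by
            intro v hv
            simp only [Finset.mem_filter] at hv ⊢
            refine ⟨hv.1, ?_⟩
            have hd : v ∉ f \ s := by
              intro hd
              obtain ⟨hvf, hvs⟩ := Finset.mem_sdiff.mp hd
              exact hvs ((hωj v hvf).mp (hqj ▸ hv.2))
            rw [hζω v hd]; exact hv.2
          intro hD
          exact hωB q hq (hDdown q.2 q.1 hq'.1 _ hD _ hsub)
        · have hdisj : f ∩ q.1 = ∅ :=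
            hq'.2.2 hqj
          have heq : q.1.filter (fun v => ζ v = q.2) = q.1.filter (fun v => ω v = q.2) := by
            refine Finset.filter_congr fun v hv => ?_
            have hvnf : v ∉ f := by
              intro hvf
              have : v ∈ f ∩ q.1 := Finset.mem_inter.mpr ⟨hvf, hv⟩
              rw [hdisj] at this; exact absurd this (Finset.notMem_empty v)
            rw [hζω v (fun hd => hvnf (Finset.mem_sdiff.mp hd).1)]
          rw [heq]
          exact hωB q hq
      · -- F ζ = s ∪ s'
        ext v
        rw [hFmem, Finset.mem_union]
        constructor
        · rintro ⟨hvf, hv⟩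
          by_cases hd : v ∈ f \ s
          · rw [hζω' v hd] at hv
            exact Or.inr ((hω'j v hvf).mp hv)
          · rw [hζω v hd] at hv
            exact Or.inl ((hωj v hvf).mp hv)
        · rintro (hvs | hvs')
          · have hvf : v ∈ f := hs hvs
            refine ⟨hvf, ?_⟩
            rw [hζω v (hmemfs v hvs)]
            exact (hωj v hvf).mpr hvs
          · have hvf : v ∈ f := hs' hvs'
            refine ⟨hvf, ?_⟩
            by_cases hd : v ∈ f \ s
            · rw [hζω' v hd]; exact (hω'j v hvf).mpr hvs'
            · have hvs : v ∈ s := by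
                by_contra hvs2; exact hd (Finset.mem_sdiff.mpr ⟨hvf, hvs2⟩)
              rw [hζω v hd]; exact (hωj v hvf).mpr hvs
    calc ∑ p ∈ ((Finset.univ.filter (· ∈ B)).filter (fun ω => F ω = s)) ×ˢ
            (Finset.univ.filter (fun ω => F ω = s')), W p.1 * W p.2
        = ∑ p ∈ ((Finset.univ.filter (· ∈ B)).filter (fun ω => F ω = s)) ×ˢ
            (Finset.univ.filter (fun ω => F ω = s')), W (σ p).1 * W (σ p).2 :=
          Finset.sum_congr rfl fun p _ => hwt p
      _ = ∑ q ∈ (((Finset.univ.filter (· ∈ B)).filter (fun ω => F ω = s)) ×ˢ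
            (Finset.univ.filter (fun ω => F ω = s'))).image σ, W q.1 * W q.2 := by
          rw [Finset.sum_image]
          intro a _ b _ hab
          have := congrArg σ hab
          rwa [hσinv, hσinv] at this
      _ ≤ ∑ q ∈ (Finset.univ.filter (fun ω => F ω = s ∩ s')) ×ˢ
            ((Finset.univ.filter (· ∈ B)).filter (fun ω => F ω = s ∪ s')), W q.1 * W q.2 := by
          refine Finset.sum_le_sum_of_subset_of_nonneg ?_ fun q _ _ => mul_nonneg (hW0 _) (hW0 _)
          intro q hq
          obtain ⟨p, hp, rfl⟩ := Finset.mem_image.mp hq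
          exact hmaps p hp
  -- fiberwise summation
  have fiber : ∀ (u : Finset Ω) (h : Ω → ℝ),
      ∑ s ∈ f.powerset, ∑ ω ∈ u.filter (fun ω => F ω = s), h ω = ∑ ω ∈ u, h ω := by
    intro u h
    exact Finset.sum_fiberwise_of_maps_to (fun ω _ => Finset.mem_powerset.mpr (hFsub ω)) h
  -- applying the four functions theorem (FKG-style)
  have h2nn : (0 : Finset (Fin n) → ℝ) ≤ fun s => if s ∈ D j f then 0 else m s := by
    intro s; dsimp only; split
    · exact le_rfl
    · exact hm0 s
  have h4nn : (0 : Finset (Fin n) → ℝ) ≤ fun s => if s ∈ D j f then 0 else g s := by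
    intro s; dsimp only; split
    · exact le_rfl
    · exact hg0 s
  have hyp : ∀ ⦃s⦄, s ⊆ f → ∀ ⦃s'⦄, s' ⊆ f →
      g s * (if s' ∈ D j f then 0 else m s') ≤
        m (s ∩ s') * (if s ∪ s' ∈ D j f then 0 else g (s ∪ s')) := by
    intro s hs s' hs'
    by_cases hD' : s' ∈ D j f
    · simp only [hD', if_true, mul_zero]
      refine mul_nonneg (hm0 _) ?_
      split
      · exact le_rfl
      · exact hg0 _
    · have hDu : s ∪ s' ∉ D j f := fun h =>
        hD' (hDdown j f hf _ h _ Finset.subset_union_right)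
      simp only [hD', hDu, if_false]
      exact key s hs s' hs'
  have fkg := Finset.four_functions_theorem (f₁ := g)
      (f₂ := fun s => if s ∈ D j f then 0 else m s) (f₃ := m)
      (f₄ := fun s => if s ∈ D j f then 0 else g s) f
      (fun s => hg0 s) h2nn (fun s => hm0 s) h4nn hyp
      (Finset.Subset.refl f.powerset) (Finset.Subset.refl f.powerset)
  rw [Finset.powerset_infs_powerset_self, Finset.powerset_sups_powerset_self] at fkg
  -- identify the four sums
  have htot : ∑ ω : Ω, W ω = 1 := by
    have h1 := hPE Set.univ
    simp only [measure_univ, ENNReal.toReal_one, hPdef] at h1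
    rw [h1]
    exact Finset.sum_congr (by ext ω; simp) (fun _ _ => rfl)
  have hsum1 : ∑ s ∈ f.powerset, g s = P B := by
    rw [hgdef, hPdef]; exact fiber _ _
  have hsum3 : ∑ s ∈ f.powerset, m s = 1 := by
    rw [hmdef, fiber Finset.univ W]; exact htot
  have hAiff : ∀ ω : Ω, ω ∈ Aᶜ ↔ F ω ∉ D j f := by
    intro ω
    rw [Set.mem_compl_iff, hmemA]
  have e1 : ∀ u : Finset Ω, ∀ s ∈ f.powerset, (if s ∈ D j f then 0 else
        ∑ ω ∈ u.filter (fun ω => F ω = s), W ω) =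
      ∑ ω ∈ u.filter (fun ω => F ω = s), (if F ω ∈ D j f then 0 else W ω) := by
    intro u s _
    by_cases hD' : s ∈ D j f
    · rw [if_pos hD']
      refine (Finset.sum_eq_zero fun ω hω => ?_).symm
      rw [if_pos]
      rw [(Finset.mem_filter.mp hω).2]; exact hD'
    · rw [if_neg hD']
      refine Finset.sum_congr rfl fun ω hω => ?_
      rw [if_neg]
      rw [(Finset.mem_filter.mp hω).2]; exact hD'
  have hsum2 : (∑ s ∈ f.powerset, if s ∈ D j f then 0 else m s) = P Aᶜ := by
    rw [hmdef]
    rw [Finset.sum_congr rfl (e1 Finset.univ), fiber Finset.univ _]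
    simp only [hPdef]
    rw [Finset.sum_filter]
    refine Finset.sum_congr rfl fun ω _ => ?_
    by_cases h : F ω ∈ D j f
    · rw [if_pos h, if_neg (fun hc => ((hAiff ω).mp hc) h)]
    · rw [if_neg h, if_pos ((hAiff ω).mpr h)]
  have hsum4 : (∑ s ∈ f.powerset, if s ∈ D j f then 0 else g s) = P (Aᶜ ∩ B) := by
    rw [hgdef]
    rw [Finset.sum_congr rfl (e1 (Finset.univ.filter (· ∈ B))),
      fiber (Finset.univ.filter (· ∈ B)) _]
    simp only [hPdef, Finset.sum_filter]
    refine Finset.sum_congr rfl fun ω _ => ?_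
    by_cases hB : ω ∈ B <;> by_cases h : F ω ∈ D j f <;>
      simp [Set.mem_inter_iff, hB, h, (hAiff ω).mpr, hAiff ω]
  -- split identities
  have hsplitB : P B = P (B ∩ A) + P (Aᶜ ∩ B) := by
    simp only [hPdef, Finset.sum_filter, ← Finset.sum_add_distrib]
    refine Finset.sum_congr rfl fun ω _ => ?_
    by_cases hA : ω ∈ A <;> by_cases hB : ω ∈ B <;>
      simp [Set.mem_inter_iff, hA, hB]
  have hsplitA : P A + P Aᶜ = 1 := by
    rw [← htot]
    simp only [hPdef, Finset.sum_filter, ← Finset.sum_add_distrib]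
    refine Finset.sum_congr rfl fun ω _ => ?_
    by_cases hA : ω ∈ A <;> simp [hA]
  -- conclude the real inequality
  have main : P (B ∩ A) ≤ P B * P A := by
    rw [hsum1, hsum2, hsum3, hsum4, one_mul] at fkg
    have e : P B * P Aᶜ = P B - P B * P A := by
      have hAc : P Aᶜ = 1 - P A := by linarith
      rw [hAc]; ring
    rw [e] at fkg
    linarith
  -- back to ENNReal
  have hBmeas : MeasurableSet B := (Set.to_countable B).measurableSet
  have hmono : Measure.pi μ (B ∩ A) ≤ Measure.pi μ B * Measure.pi μ A := by
    rw [← ENNReal.toReal_le_toReal (measure_ne_top _ _)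
      (ENNReal.mul_ne_top (measure_ne_top _ _) (measure_ne_top _ _)), ENNReal.toReal_mul]
    rw [hPE, hPE, hPE]
    exact main
  rw [ProbabilityTheory.cond_apply hBmeas]
  calc (Measure.pi μ B)⁻¹ * Measure.pi μ (B ∩ A)
      ≤ (Measure.pi μ B)⁻¹ * (Measure.pi μ B * Measure.pi μ A) := by
        exact mul_le_mul_right hmono _
    _ = Measure.pi μ A := by
        rw [← mul_assoc, ENNReal.inv_mul_cancel hpos.ne' (measure_ne_top _ _), one_mul]
end
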